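/- arXiv:0905.4822 — 8 statements merged into one kernel-verified Lean document; each statement's English description precedes it below -/
import Mathlib

section
/- For any symmetric bilinear form ψ on ℂ^k, there exists a unit vector α such that |ψ(α,α)| equals the maximum of |ψ(u,v)| over all pairs of unit vectors u,v. -/
/-- For any symmetric bilinear form ψ on ℂ^k, there is a unit vector α such that
|ψ(α,α)| equals the maximum of |ψ(u,v)| over pairs of unit vectors. -/
theorem stmt_0 (k : ℕ) (hk : 0 < k)
    (ψ : EuclideanSpace ℂ (Fin k) →ₗ[ℂ] EuclideanSpace ℂ (Fin k) →ₗ[ℂ] ℂ)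
    (hsymm : ∀ u v, ψ u v = ψ v u) :
    ∃ α : EuclideanSpace ℂ (Fin k), ‖α‖ = 1 ∧
      IsGreatest {x : ℝ | ∃ u v : EuclideanSpace ℂ (Fin k),
        ‖u‖ = 1 ∧ ‖v‖ = 1 ∧ x = ‖ψ u v‖} ‖ψ α α‖ := by
  set E := EuclideanSpace ℂ (Fin k)
  haveI : Nonempty (Fin k) := Fin.pos_iff_nonempty.mp hk
  haveI : Nontrivial E := inferInstance
  -- continuity of the diagonal map
  have hF : Continuous fun u : E => ψ u u := by
    let F : E →ₗ[ℂ] E →L[ℂ] ℂ :=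
      { toFun := fun u => LinearMap.toContinuousLinearMap (ψ u)
        map_add' := by intro x y; ext z; simp
        map_smul' := by intro c x; ext z; simp }
    have hFc : Continuous F := F.continuous_of_finiteDimensional
    exact hFc.clm_apply continuous_id
  have hcont : Continuous fun u : E => ‖ψ u u‖ :=
    continuous_norm.comp hF
  have hne : (Metric.sphere (0 : E) 1).Nonempty :=
    NormedSpace.sphere_nonempty.mpr (by norm_num)
  obtain ⟨α, hαmem, hmax⟩ :=
    (isCompact_sphere (0 : E) 1).exists_isMaxOn hne hcont.continuousOn
  have hα : ‖α‖ = 1 := by simpa using mem_sphere_zero_iff_norm.mp hαmem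
  set M := ‖ψ α α‖ with hM
  have hMnonneg : 0 ≤ M := norm_nonneg _
  -- diagonal bound for arbitrary vectors
  have key : ∀ w : E, ‖ψ w w‖ ≤ M * ‖w‖ ^ 2 := by
    intro w
    rcases eq_or_ne w 0 with rfl | hw
    · simp
    · have hnw : ‖w‖ ≠ 0 := norm_ne_zero_iff.mpr hw
      set w' : E := (‖w‖ : ℂ)⁻¹ • w with hw'
      have hw'norm : ‖w'‖ = 1 := by
        rw [hw', norm_smul]
        simp [hnw, abs_of_nonneg (norm_nonneg w)]
      have hw'mem : w' ∈ Metric.sphere (0 : E) 1 := by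
        simp [mem_sphere_zero_iff_norm, hw'norm]
      have hwdecomp : w = (‖w‖ : ℂ) • w' := by
        rw [hw', smul_smul]
        rw [mul_inv_cancel₀ (by exact_mod_cast hnw), one_smul]
      have hcalc : ψ w w = (‖w‖ : ℂ) ^ 2 * ψ w' w' := by
        conv_lhs => rw [hwdecomp]
        simp [map_smul]
        ring
      rw [hcalc, norm_mul]
      have habs : ‖((‖w‖ : ℂ) ^ 2)‖ = ‖w‖ ^ 2 := by
        rw [norm_pow]
        simp [abs_of_nonneg (norm_nonneg w)]
      rw [habs, mul_comm]
      exact mul_le_mul_of_nonneg_right (hmax hw'mem) (by positivity)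
  refine ⟨α, hα, ⟨⟨α, α, hα, hα, rfl⟩, ?_⟩⟩
  rintro x ⟨u, v, hu, hv, rfl⟩
  -- polarization identity
  have h4 : (4 : ℂ) * ψ u v = ψ (u + v) (u + v) - ψ (u - v) (u - v) := by
    simp only [map_add, map_sub, LinearMap.add_apply, LinearMap.sub_apply]
    rw [hsymm v u]
    ring
  have hpar : ‖u + v‖ ^ 2 + ‖u - v‖ ^ 2 = 4 := by
    have := parallelogram_law_with_norm ℂ u v
    have h2 : ‖u + v‖ * ‖u + v‖ + ‖u - v‖ * ‖u - v‖ = 2 * (‖u‖ * ‖u‖ + ‖v‖ * ‖v‖) := by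
      simpa only [sq] using this
    rw [hu, hv] at h2
    nlinarith [h2]
  have hineq : 4 * ‖ψ u v‖ ≤ 4 * M := by
    have h1 : ‖(4 : ℂ) * ψ u v‖ = 4 * ‖ψ u v‖ := by
      rw [norm_mul]
      norm_num
    calc 4 * ‖ψ u v‖ = ‖(4 : ℂ) * ψ u v‖ := h1.symm
      _ = ‖ψ (u + v) (u + v) - ψ (u - v) (u - v)‖ := by rw [h4]
      _ ≤ ‖ψ (u + v) (u + v)‖ + ‖ψ (u - v) (u - v)‖ := by
          exact norm_sub_le _ _
      _ ≤ M * ‖u + v‖ ^ 2 + M * ‖u - v‖ ^ 2 := add_le_add (key _) (key _)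
      _ = M * (‖u + v‖ ^ 2 + ‖u - v‖ ^ 2) := by ring
      _ = 4 * M := by rw [hpar]; ring
  linarith
end

section
/- Takagi factorization: every complex symmetric k×k matrix Ψ (Ψ = Ψᵀ) can be written as Ψ = Uᵀ D U, where U is unitary and D is a diagonal matrix with nonnegative real entries in decreasing order. -/
open scoped InnerProductSpace

section Aux

variable {E : Type*} [NormedAddCommGroup E] [InnerProductSpace ℂ E]

private lemma takagi_T_zero (T : E → E) (hadd : ∀ x y, T (x + y) = T x + T y) :
    T 0 = 0 := by
  have h : T 0 + T 0 = T 0 + 0 := by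
    rw [add_zero, ← hadd, add_zero]
  exact add_left_cancel h

/-- Existence of a top con-eigenvector of an antilinear symmetric map on an invariant
subspace. -/
private lemma takagi_exists_coneig [FiniteDimensional ℂ E] (T : E → E)
    (hadd : ∀ x y, T (x + y) = T x + T y)
    (hsmul : ∀ (c : ℂ) (x : E), T (c • x) = (starRingEnd ℂ c) • T x)
    (hsym : ∀ u w : E, ⟪u, T w⟫_ℂ = ⟪w, T u⟫_ℂ)
    (V : Submodule ℂ E) (hV : V ≠ ⊥) (hinv : ∀ v ∈ V, T v ∈ V) :
    ∃ (v : E) (σ : ℝ), v ∈ V ∧ ‖v‖ = 1 ∧ 0 ≤ σ ∧ T v = (σ : ℂ) • v ∧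
      ∀ w ∈ V, ‖T w‖ ≤ σ * ‖w‖ := by
  haveI : Nontrivial V := Submodule.nontrivial_iff_ne_bot.mpr hV
  -- the (complex-linear) operator `T ∘ T` restricted to `V`
  let S : V →ₗ[ℂ] V :=
    { toFun := fun x => ⟨T (T (x : E)), hinv _ (hinv _ x.2)⟩
      map_add' := by
        intro x y
        apply Subtype.ext
        show T (T ((x : E) + (y : E))) = T (T (x : E)) + T (T (y : E))
        rw [hadd, hadd]
      map_smul' := by
        intro c x
        apply Subtype.ext
        show T (T (c • (x : E))) = c • T (T (x : E))
        rw [hsmul, hsmul]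
        simp }
  have hScoe : ∀ x : V, ((S x : E)) = T (T (x : E)) := fun x => rfl
  have hS : S.IsSymmetric := by
    intro x y
    rw [Submodule.coe_inner, Submodule.coe_inner, hScoe, hScoe]
    calc ⟪T (T (x : E)), (y : E)⟫_ℂ
        = starRingEnd ℂ ⟪(y : E), T (T (x : E))⟫_ℂ := (inner_conj_symm _ _).symm
      _ = starRingEnd ℂ ⟪T (x : E), T (y : E)⟫_ℂ := by rw [hsym]
      _ = ⟪T (y : E), T (x : E)⟫_ℂ := inner_conj_symm _ _
      _ = ⟪(x : E), T (T (y : E))⟫_ℂ := (hsym _ _).symm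
  have hray : ∀ x : V, RCLike.re ⟪S x, x⟫_ℂ = ‖T (x : E)‖ ^ 2 := by
    intro x
    rw [Submodule.coe_inner, hScoe]
    have h1 : ⟪T (T (x : E)), (x : E)⟫_ℂ = ((‖T (x : E)‖ : ℂ)) ^ 2 := by
      calc ⟪T (T (x : E)), (x : E)⟫_ℂ
          = starRingEnd ℂ ⟪(x : E), T (T (x : E))⟫_ℂ := (inner_conj_symm _ _).symm
        _ = starRingEnd ℂ ⟪T (x : E), T (x : E)⟫_ℂ := by rw [hsym (x : E) (T (x : E))]
        _ = starRingEnd ℂ (((‖T (x : E)‖ : ℂ)) ^ 2) := by rw [inner_self_eq_norm_sq_to_K]; rfl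
        _ = ((‖T (x : E)‖ : ℂ)) ^ 2 := by rw [map_pow, Complex.conj_ofReal]
    rw [h1, ← Complex.ofReal_pow]
    exact Complex.ofReal_re _
  -- Rayleigh quotient supremum
  set μ : ℝ := ⨆ x : { x : V // x ≠ 0 }, RCLike.re ⟪S x, x⟫_ℂ / ‖(x : V)‖ ^ 2 with hμdef
  have hμeig : Module.End.HasEigenvalue S (μ : ℂ) :=
    hS.hasEigenvalue_iSup_of_finiteDimensional
  set C : ℝ := ‖LinearMap.toContinuousLinearMap S‖ with hCdef
  have hC : ∀ x : V, ‖S x‖ ≤ C * ‖x‖ := fun x =>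
    (LinearMap.toContinuousLinearMap S).le_opNorm x
  have hbdd : BddAbove (Set.range fun x : { x : V // x ≠ 0 } =>
      RCLike.re ⟪S (x : V), (x : V)⟫_ℂ / ‖(x : V)‖ ^ 2) := by
    refine ⟨C, ?_⟩
    rintro _ ⟨x, rfl⟩
    have hx : (0 : ℝ) < ‖(x : V)‖ := norm_pos_iff.mpr x.2
    rw [div_le_iff₀ (by positivity)]
    calc RCLike.re ⟪S (x : V), (x : V)⟫_ℂ ≤ ‖⟪S (x : V), (x : V)⟫_ℂ‖ := RCLike.re_le_norm _
      _ ≤ ‖S (x : V)‖ * ‖(x : V)‖ := norm_inner_le_norm _ _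
      _ ≤ (C * ‖(x : V)‖) * ‖(x : V)‖ :=
        mul_le_mul_of_nonneg_right (hC _) (norm_nonneg _)
      _ = C * ‖(x : V)‖ ^ 2 := by ring
  have hle : ∀ x : V, x ≠ 0 → ‖T (x : E)‖ ^ 2 ≤ μ * ‖(x : V)‖ ^ 2 := by
    intro x hx
    have h := le_ciSup hbdd ⟨x, hx⟩
    rw [hray] at h
    have hx0 : (0 : ℝ) < ‖(x : V)‖ := norm_pos_iff.mpr hx
    rw [div_le_iff₀ (by positivity)] at h
    linarith [h]
  have hμ0 : 0 ≤ μ := by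
    obtain ⟨x, hx⟩ := exists_ne (0 : V)
    have hx0 : (0 : ℝ) < ‖(x : V)‖ := norm_pos_iff.mpr hx
    have h := hle x hx
    nlinarith [h, pow_pos hx0 2, sq_nonneg ‖T (x : E)‖]
  set σ : ℝ := Real.sqrt μ with hσdef
  have hσ0 : 0 ≤ σ := Real.sqrt_nonneg _
  have hσ2 : σ ^ 2 = μ := Real.sq_sqrt hμ0
  obtain ⟨w, hw⟩ := hμeig.exists_hasEigenvector
  have hweq : S w = (μ : ℂ) • w := Module.End.mem_eigenspace_iff.mp hw.1
  have hwne : w ≠ 0 := hw.2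
  -- produce a (possibly non-normalized) con-eigenvector `v0`
  have hv0 : ∃ v0 : E, v0 ∈ V ∧ v0 ≠ 0 ∧ T v0 = (σ : ℂ) • v0 := by
    by_cases hu : T (w : E) + (σ : ℂ) • (w : E) = 0
    · -- then `T w = -σ w`, use `i • w`
      have hTw : T (w : E) = -((σ : ℂ) • (w : E)) := by
        rw [eq_neg_iff_add_eq_zero]; exact hu
      refine ⟨Complex.I • (w : E), Submodule.smul_mem _ _ w.2, ?_, ?_⟩
      · exact smul_ne_zero Complex.I_ne_zero (by simpa using hwne)
      · rw [hsmul, Complex.conj_I, hTw, neg_smul, smul_neg, neg_neg, smul_smul,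
          smul_smul, mul_comm]
    · refine ⟨T (w : E) + (σ : ℂ) • (w : E),
        Submodule.add_mem _ (hinv _ w.2) (Submodule.smul_mem _ _ w.2), hu, ?_⟩
      have hTTw : T (T (w : E)) = (μ : ℂ) • (w : E) := by
        have := congrArg (Subtype.val) hweq
        simpa [hScoe] using this
      rw [hadd, hsmul, hTTw, Complex.conj_ofReal, smul_add, smul_smul]
      have hμσ : ((σ : ℂ)) * (σ : ℂ) = (μ : ℂ) := by
        rw [← Complex.ofReal_mul]
        norm_cast
        nlinarith [hσ2]
      rw [hμσ]
      abel
  obtain ⟨v0, hv0V, hv0ne, hv0T⟩ := hv0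
  -- normalize
  have hnz : ((‖v0‖ : ℂ)) ≠ 0 := by
    simpa using norm_ne_zero_iff.mpr hv0ne
  refine ⟨((‖v0‖ : ℂ))⁻¹ • v0, σ, Submodule.smul_mem _ _ hv0V, ?_, hσ0, ?_, ?_⟩
  · rw [norm_smul]
    simp [norm_inv, inv_mul_cancel₀ (norm_ne_zero_iff.mpr hv0ne)]
  · rw [hsmul, hv0T, map_inv₀, Complex.conj_ofReal, smul_smul, smul_smul, mul_comm]
  · intro x hx
    rcases eq_or_ne x 0 with rfl | hx0
    · rw [takagi_T_zero T hadd]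
      simp
    · have h := hle ⟨x, hx⟩ (by simpa using hx0)
      have hxn : ‖(⟨x, hx⟩ : V)‖ = ‖x‖ := rfl
      rw [hxn] at h
      nlinarith [norm_nonneg (T x), norm_nonneg x, mul_nonneg hσ0 (norm_nonneg x), hσ2]


/-- Orthonormal family of con-eigenvectors with decreasing con-eigenvalues, on any
invariant subspace. -/
private lemma takagi_family [FiniteDimensional ℂ E] (T : E → E)
    (hadd : ∀ x y, T (x + y) = T x + T y)
    (hsmul : ∀ (c : ℂ) (x : E), T (c • x) = (starRingEnd ℂ c) • T x)
    (hsym : ∀ u w : E, ⟪u, T w⟫_ℂ = ⟪w, T u⟫_ℂ) :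
    ∀ (n : ℕ) (V : Submodule ℂ E), Module.finrank ℂ V = n → (∀ v ∈ V, T v ∈ V) →
      ∃ (f : Fin n → E) (σ : Fin n → ℝ),
        Orthonormal ℂ f ∧ (∀ i, f i ∈ V) ∧ (∀ i, T (f i) = (σ i : ℂ) • f i) ∧
        (∀ i, 0 ≤ σ i) ∧ (∀ i j, i ≤ j → σ j ≤ σ i) ∧
        (∀ C, 0 ≤ C → (∀ w ∈ V, ‖T w‖ ≤ C * ‖w‖) → ∀ i, σ i ≤ C) := by
  intro n
  induction n with
  | zero =>
    intro V _ _
    exact ⟨Fin.elim0, Fin.elim0, orthonormal_iff_ite.mpr (fun i => i.elim0),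
      fun i => i.elim0, fun i => i.elim0, fun i => i.elim0, fun i j _ => j.elim0,
      fun C _ _ i => i.elim0⟩
  | succ n ih =>
    intro V hVrank hinv
    have hVne : V ≠ ⊥ := by
      intro h
      rw [h, finrank_bot] at hVrank
      omega
    obtain ⟨v, σ0, hvV, hvnorm, hσ0, hvT, hbound⟩ :=
      takagi_exists_coneig T hadd hsmul hsym V hVne hinv
    have hvne : v ≠ 0 := by
      intro h; rw [h, norm_zero] at hvnorm; norm_num at hvnorm
    set W : Submodule ℂ E := (ℂ ∙ v)ᗮ ⊓ V with hWdef
    have hWle : W ≤ V := inf_le_right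
    have hWorth : W ≤ (ℂ ∙ v)ᗮ := inf_le_left
    have hWrank : Module.finrank ℂ W = n := by
      have hsp : (ℂ ∙ v) ≤ V := by rwa [Submodule.span_singleton_le_iff_mem]
      refine Submodule.finrank_add_inf_finrank_orthogonal' hsp ?_
      rw [finrank_span_singleton hvne, hVrank]
      omega
    have hvw : ∀ w ∈ W, ⟪v, w⟫_ℂ = 0 := by
      intro w hw
      exact (Submodule.mem_orthogonal _ _).mp (hWorth hw) v
        (Submodule.mem_span_singleton_self v)
    have hWinv : ∀ w ∈ W, T w ∈ W := by
      intro w hw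
      rw [Submodule.mem_inf]
      refine ⟨?_, hinv _ (hWle hw)⟩
      rw [Submodule.mem_orthogonal]
      intro u hu
      obtain ⟨c, rfl⟩ := Submodule.mem_span_singleton.mp hu
      rw [inner_smul_left, hsym, hvT, inner_smul_right]
      have : ⟪w, v⟫_ℂ = 0 := by
        rw [← inner_conj_symm, hvw w hw, map_zero]
      rw [this]
      ring
    obtain ⟨f', σ', hON, hmem, hTf, hnn, hmono, hbd⟩ := ih W hWrank hWinv
    refine ⟨Fin.cons v f', Fin.cons σ0 σ', ?_, ?_, ?_, ?_, ?_, ?_⟩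
    · rw [orthonormal_iff_ite]
      intro i j
      refine Fin.cases ?_ (fun i' => ?_) i <;> [skip; skip] <;>
        refine Fin.cases ?_ (fun j' => ?_) j
      · simp [inner_self_eq_norm_sq_to_K, hvnorm]
      · simp only [Fin.cons_zero, Fin.cons_succ]
        rw [hvw _ (hmem j')]
        exact (if_neg (Ne.symm (Fin.succ_ne_zero j'))).symm
      · simp only [Fin.cons_zero, Fin.cons_succ]
        rw [← inner_conj_symm, hvw _ (hmem i'), map_zero]
        exact (if_neg (Fin.succ_ne_zero i')).symm
      · simp only [Fin.cons_succ]
        rw [orthonormal_iff_ite.mp hON i' j']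
        simp [Fin.succ_inj]
    · intro i
      refine Fin.cases ?_ (fun i' => ?_) i
      · simpa using hvV
      · simpa using hWle (hmem i')
    · intro i
      refine Fin.cases ?_ (fun i' => ?_) i
      · simpa using hvT
      · simpa using hTf i'
    · intro i
      refine Fin.cases ?_ (fun i' => ?_) i
      · simpa using hσ0
      · simpa using hnn i'
    · intro i j
      refine Fin.cases ?_ (fun i' => ?_) i <;>
        refine Fin.cases ?_ (fun j' => ?_) j <;> intro hij
      · exact le_refl _
      · simp only [Fin.cons_zero, Fin.cons_succ]
        exact hbd σ0 hσ0 (fun w hw => hbound w (hWle hw)) j'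
      · exact absurd (le_antisymm hij (Fin.zero_le _)) (Fin.succ_ne_zero i')
      · simp only [Fin.cons_succ]
        exact hmono i' j' (Fin.succ_le_succ_iff.mp hij)
    · intro C hC0 hCb i
      refine Fin.cases ?_ (fun i' => ?_) i
      · have h1 : ‖T v‖ = σ0 := by
          rw [hvT, norm_smul, hvnorm, mul_one]
          simp [abs_of_nonneg hσ0]
        have h2 := hCb v hvV
        rw [h1, hvnorm, mul_one] at h2
        simpa using h2
      · simpa using hbd C hC0 (fun w hw => hCb w (hWle hw)) i'

end Aux

/-- Takagi factorization: every complex symmetric k×k matrix Ψ can be written as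
Ψ = Uᵀ D U with U unitary and D diagonal with nonnegative real entries in
decreasing order. -/
theorem stmt_1 (k : ℕ) (Ψ : Matrix (Fin k) (Fin k) ℂ) (hΨ : Ψ = Ψ.transpose) :
    ∃ (U : Matrix (Fin k) (Fin k) ℂ) (d : Fin k → ℝ),
      U ∈ Matrix.unitaryGroup (Fin k) ℂ ∧
      (∀ i, 0 ≤ d i) ∧
      (∀ i j : Fin k, i ≤ j → d j ≤ d i) ∧
      Ψ = U.transpose * Matrix.diagonal (fun i => (d i : ℂ)) * U := by
  classical
  set E := EuclideanSpace ℂ (Fin k)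
  have hΨsym : ∀ a b, Ψ b a = Ψ a b := by
    intro a b
    conv_lhs => rw [hΨ]
    rfl
  set T : E → E := fun x => (WithLp.toLp 2 (Ψ.mulVec (fun b => starRingEnd ℂ (x b))) : E) with hTdef
  have hTapp : ∀ (x : E) (a : Fin k), T x a = ∑ b, Ψ a b * starRingEnd ℂ (x b) := by
    intro x a
    rfl
  have hadd : ∀ x y : E, T (x + y) = T x + T y := by
    intro x y
    ext a
    have : (T (x + y)) a = T x a + T y a := by
      rw [hTapp, hTapp, hTapp]
      rw [← Finset.sum_add_distrib]
      refine Finset.sum_congr rfl fun b _ => ?_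
      have : (x + y) b = x b + y b := rfl
      rw [this, map_add, mul_add]
    exact this
  have hsmul : ∀ (c : ℂ) (x : E), T (c • x) = (starRingEnd ℂ c) • T x := by
    intro c x
    ext a
    have h1 : T (c • x) a = ∑ b, Ψ a b * (starRingEnd ℂ c * starRingEnd ℂ (x b)) := by
      rw [hTapp]
      refine Finset.sum_congr rfl fun b _ => ?_
      have : (c • x) b = c * x b := rfl
      rw [this, map_mul]
    have h2 : ((starRingEnd ℂ c) • T x) a = starRingEnd ℂ c * T x a := rfl
    rw [h1, h2, hTapp, Finset.mul_sum]
    refine Finset.sum_congr rfl fun b _ => ?_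
    ring
  have hsym : ∀ u w : E, ⟪u, T w⟫_ℂ = ⟪w, T u⟫_ℂ := by
    intro u w
    rw [PiLp.inner_apply, PiLp.inner_apply]
    simp only [RCLike.inner_apply, hTapp, Finset.mul_sum, Finset.sum_mul]
    rw [Finset.sum_comm]
    refine Finset.sum_congr rfl fun a _ => Finset.sum_congr rfl fun b _ => ?_
    rw [hΨsym a b]
    ring
  have hrank : Module.finrank ℂ (⊤ : Submodule ℂ E) = k := by
    rw [finrank_top, finrank_euclideanSpace_fin]
  obtain ⟨f, σ, hON, _, hTf, hnn, hmono, _⟩ :=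
    takagi_family T hadd hsmul hsym k ⊤ hrank (fun v _ => Submodule.mem_top)
  set U : Matrix (Fin k) (Fin k) ℂ := Matrix.of fun i a => f i a with hUdef
  have hUmem : U ∈ Matrix.unitaryGroup (Fin k) ℂ := by
    rw [Matrix.mem_unitaryGroup_iff]
    ext i j
    rw [Matrix.mul_apply, Matrix.one_apply]
    have h1 : ∀ a, (star U) a j = starRingEnd ℂ (f j a) := by
      intro a
      rfl
    have h2 := orthonormal_iff_ite.mp hON j i
    rw [PiLp.inner_apply] at h2
    simp only [RCLike.inner_apply] at h2
    calc ∑ a, U i a * (star U) a j = ∑ a, starRingEnd ℂ (f j a) * f i a := by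
          refine Finset.sum_congr rfl fun a _ => ?_
          rw [h1 a]
          exact mul_comm _ _
      _ = if j = i then 1 else 0 := (Finset.sum_congr rfl fun a _ => mul_comm _ _).trans h2
      _ = if i = j then 1 else 0 := by simp [eq_comm]
  have hPsiU : Ψ * (star U) = U.transpose * Matrix.diagonal (fun i => (σ i : ℂ)) := by
    ext a j
    rw [Matrix.mul_apply, Matrix.mul_diagonal, Matrix.transpose_apply]
    have h1 : ∀ b, (star U) b j = starRingEnd ℂ (f j b) := fun b => rfl
    have h2 : ∑ b, Ψ a b * (star U) b j = T (f j) a := by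
      rw [hTapp]
      exact Finset.sum_congr rfl fun b _ => by rw [h1 b]
    rw [h2, hTf j]
    have h3 : ((σ j : ℂ) • f j) a = (σ j : ℂ) * f j a := rfl
    rw [h3]
    have h4 : U j a = f j a := rfl
    rw [h4]
    ring
  refine ⟨U, σ, hUmem, hnn, hmono, ?_⟩
  have hUU : star U * U = 1 := Matrix.mem_unitaryGroup_iff'.mp hUmem
  calc Ψ = Ψ * 1 := (mul_one Ψ).symm
    _ = Ψ * (star U * U) := by rw [hUU]
    _ = (Ψ * star U) * U := (mul_assoc _ _ _).symm
    _ = U.transpose * Matrix.diagonal (fun i => (σ i : ℂ)) * U := by rw [hPsiU]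
end

section
/- If Ψ = Uᵀ D U is a Takagi factorization of a complex symmetric k×k matrix with D = diag(r₁,…,r_k), r₁ > r₂ ≥ … ≥ r_k ≥ 0, and unit vectors α, β satisfy |αᵀ Ψ β| = r₁, then α and β are each equal, up to a complex phase, to U† e₁ where e₁ is the first standard basis vector; in particular α and β agree up to a phase. -/
open Matrix

lemma stmt2_norm_aux (k : ℕ) (U : Matrix (Fin k) (Fin k) ℂ)
    (hUU : Uᴴ * U = 1) (α : Fin k → ℂ) :
    ∑ i, ‖(U *ᵥ α) i‖ ^ 2 = ∑ i, ‖α i‖ ^ 2 := by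
  have h1 : star (U *ᵥ α) ⬝ᵥ (U *ᵥ α) = star α ⬝ᵥ α := by
    rw [Matrix.star_mulVec, Matrix.dotProduct_mulVec, Matrix.vecMul_vecMul, hUU,
      Matrix.vecMul_one]
  have h2 : ∀ v : Fin k → ℂ, star v ⬝ᵥ v = ((∑ i, ‖v i‖ ^ 2 : ℝ) : ℂ) := by
    intro v
    simp only [dotProduct, Pi.star_apply, Complex.star_def, Complex.sq_norm]
    push_cast
    congr 1
    ext i
    exact (Complex.normSq_eq_conj_mul_self).symm ▸ rfl
  have := h1
  rw [h2, h2] at this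
  exact_mod_cast this

lemma stmt2_form_aux (k : ℕ) (U : Matrix (Fin k) (Fin k) ℂ) (d : Fin k → ℝ)
    (α β : Fin k → ℂ) :
    α ⬝ᵥ ((U.transpose * Matrix.diagonal (fun i => (d i : ℂ)) * U) *ᵥ β)
      = ∑ i, (d i : ℂ) * ((U *ᵥ α) i * (U *ᵥ β) i) := by
  rw [Matrix.dotProduct_mulVec, ← Matrix.vecMul_vecMul, ← Matrix.vecMul_vecMul,
    Matrix.vecMul_transpose, ← Matrix.dotProduct_mulVec]
  simp only [dotProduct, Matrix.vecMul_diagonal]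
  congr 1; ext i; ring

/-- If Ψ = Uᵀ D U is a Takagi factorization with r₁ > r₂ ≥ … ≥ r_k ≥ 0 and unit
vectors α, β satisfy |αᵀ Ψ β| = r₁, then α ≡ β ≡ U† e₁ up to phases. -/
theorem stmt_2 (k : ℕ) (hk : 2 ≤ k)
    (Ψ U : Matrix (Fin k) (Fin k) ℂ) (d : Fin k → ℝ)
    (hU : U ∈ Matrix.unitaryGroup (Fin k) ℂ)
    (hΨ : Ψ = Ψ.transpose)
    (hfact : Ψ = U.transpose * Matrix.diagonal (fun i => (d i : ℂ)) * U)
    (hnonneg : ∀ i, 0 ≤ d i)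
    (hdec : ∀ i j : Fin k, i ≤ j → d j ≤ d i)
    (hgap : d ⟨1, by omega⟩ < d ⟨0, by omega⟩)
    (α β : Fin k → ℂ)
    (hα : ∑ i, ‖α i‖ ^ 2 = 1)
    (hβ : ∑ i, ‖β i‖ ^ 2 = 1)
    (hmax : ‖α ⬝ᵥ (Ψ *ᵥ β)‖ = d ⟨0, by omega⟩) :
    ∃ c c' : ℂ, ‖c‖ = 1 ∧ ‖c'‖ = 1 ∧
      α = c • (U.conjTranspose *ᵥ Pi.single ⟨0, by omega⟩ 1) ∧
      β = c' • (U.conjTranspose *ᵥ Pi.single ⟨0, by omega⟩ 1) := by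
  classical
  have hUU : Uᴴ * U = 1 := by
    have := hU.1
    rwa [Matrix.star_eq_conjTranspose] at this
  set i0 : Fin k := ⟨0, by omega⟩ with hi0def
  set i1 : Fin k := ⟨1, by omega⟩ with hi1def
  set x := U *ᵥ α with hxdef
  set y := U *ᵥ β with hydef
  have hxn : ∑ i, ‖x i‖ ^ 2 = 1 := by
    rw [hxdef, stmt2_norm_aux k U hUU α]; exact hα
  have hyn : ∑ i, ‖y i‖ ^ 2 = 1 := by
    rw [hydef, stmt2_norm_aux k U hUU β]; exact hβ
  have hform : α ⬝ᵥ (Ψ *ᵥ β) = ∑ i, (d i : ℂ) * (x i * y i) := by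
    rw [hfact]; exact stmt2_form_aux k U d α β
  set r0 := d i0 with hr0
  -- step 1: triangle inequality
  have h1 : r0 ≤ ∑ i, d i * (‖x i‖ * ‖y i‖) := by
    calc r0 = ‖α ⬝ᵥ (Ψ *ᵥ β)‖ := hmax.symm
      _ = ‖∑ i, (d i : ℂ) * (x i * y i)‖ := by rw [hform]
      _ ≤ ∑ i, ‖(d i : ℂ) * (x i * y i)‖ :=
          norm_sum_le _ _
      _ = ∑ i, d i * (‖x i‖ * ‖y i‖) := by
          refine Finset.sum_congr rfl fun i _ => ?_
          rw [norm_mul, norm_mul, Complex.norm_real, Real.norm_eq_abs, abs_of_nonneg (hnonneg i)]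
  -- step 2: AM-GM termwise
  have h2 : ∑ i, d i * (‖x i‖ * ‖y i‖)
      ≤ ∑ i, d i * ((‖x i‖ ^ 2 + ‖y i‖ ^ 2) / 2) := by
    refine Finset.sum_le_sum fun i _ => ?_
    have := sq_nonneg (‖x i‖ - ‖y i‖)
    have h := hnonneg i
    nlinarith
  -- step 3: rewrite RHS
  have h3 : ∑ i, d i * ((‖x i‖ ^ 2 + ‖y i‖ ^ 2) / 2)
      = r0 - ∑ i, (r0 - d i) * ((‖x i‖ ^ 2 + ‖y i‖ ^ 2) / 2) := by
    have hsum : ∑ i, ((‖x i‖ ^ 2 + ‖y i‖ ^ 2) / 2) = 1 := by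
      rw [← Finset.sum_div, Finset.sum_add_distrib, hxn, hyn]; norm_num
    have expand : ∀ i : Fin k,
        (r0 - d i) * ((‖x i‖ ^ 2 + ‖y i‖ ^ 2) / 2)
        = r0 * ((‖x i‖ ^ 2 + ‖y i‖ ^ 2) / 2)
          - d i * ((‖x i‖ ^ 2 + ‖y i‖ ^ 2) / 2) := fun i => by ring
    rw [Finset.sum_congr rfl fun i _ => expand i, Finset.sum_sub_distrib,
      ← Finset.mul_sum, hsum]
    ring
  -- conclude sum of nonneg terms vanishes
  have hle0 : ∑ i, (r0 - d i) * ((‖x i‖ ^ 2 + ‖y i‖ ^ 2) / 2) ≤ 0 := by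
    linarith [h1.trans h2, h3]
  have hterm_nonneg : ∀ i ∈ Finset.univ (α := Fin k),
      0 ≤ (r0 - d i) * ((‖x i‖ ^ 2 + ‖y i‖ ^ 2) / 2) := by
    intro i _
    have h0le : i0 ≤ i := by simp [hi0def, Fin.le_def]
    have := hdec i0 i h0le
    have := sq_nonneg (‖x i‖)
    have := sq_nonneg (‖y i‖)
    nlinarith
  have hsum0 : ∑ i, (r0 - d i) * ((‖x i‖ ^ 2 + ‖y i‖ ^ 2) / 2) = 0 :=
    le_antisymm hle0 (Finset.sum_nonneg hterm_nonneg)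
  have hterm0 := (Finset.sum_eq_zero_iff_of_nonneg hterm_nonneg).mp hsum0
  -- zero entries off the top index
  have hzero : ∀ i : Fin k, i ≠ i0 → x i = 0 ∧ y i = 0 := by
    intro i hi
    have h1le : i1 ≤ i := by
      rw [hi1def, Fin.le_def]
      show 1 ≤ (i : ℕ)
      have : (i : ℕ) ≠ 0 := fun h => hi (Fin.ext h)
      omega
    have hdi : d i < r0 := lt_of_le_of_lt (hdec i1 i h1le) hgap
    have ht := hterm0 i (Finset.mem_univ i)
    have habs : ‖x i‖ ^ 2 + ‖y i‖ ^ 2 = 0 := by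
      have hpos : 0 < r0 - d i := by linarith
      have := mul_eq_zero.mp ht
      rcases this with h | h
      · linarith
      · linarith [sq_nonneg (‖x i‖), sq_nonneg (‖y i‖)]
    have hx0 : ‖x i‖ = 0 := by
      have := sq_nonneg (‖x i‖); have := sq_nonneg (‖y i‖)
      have : ‖x i‖ ^ 2 = 0 := by linarith
      exact pow_eq_zero_iff (by norm_num) |>.mp this
    have hy0 : ‖y i‖ = 0 := by
      have := sq_nonneg (‖x i‖); have := sq_nonneg (‖y i‖)
      have : ‖y i‖ ^ 2 = 0 := by linarith
      exact pow_eq_zero_iff (by norm_num) |>.mp this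
    exact ⟨norm_eq_zero.mp hx0, norm_eq_zero.mp hy0⟩
  -- top entries have modulus one
  have habs_top : ∀ (v : Fin k → ℂ), (∑ i, ‖v i‖ ^ 2 = 1) →
      (∀ i, i ≠ i0 → v i = 0) → ‖v i0‖ = 1 := by
    intro v hv hz
    have : ∑ i, ‖v i‖ ^ 2 = ‖v i0‖ ^ 2 := by
      refine Finset.sum_eq_single i0 (fun i _ hi => by simp [hz i hi]) (fun h => absurd (Finset.mem_univ i0) h)
    rw [this] at hv
    have h0 := norm_nonneg (v i0)
    nlinarith
  have hxa : ‖x i0‖ = 1 := habs_top x hxn (fun i hi => (hzero i hi).1)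
  have hya : ‖y i0‖ = 1 := habs_top y hyn (fun i hi => (hzero i hi).2)
  -- reconstruct α and β
  have hrec : ∀ (γ : Fin k → ℂ) (v : Fin k → ℂ), v = U *ᵥ γ → (∀ i, i ≠ i0 → v i = 0) →
      γ = v i0 • (U.conjTranspose *ᵥ (Pi.single i0 1 : Fin k → ℂ)) := by
    intro γ v hvdef hz
    have hγ : γ = Uᴴ *ᵥ v := by
      rw [hvdef, Matrix.mulVec_mulVec, hUU, Matrix.one_mulVec]
    have hv : v = v i0 • (Pi.single i0 1 : Fin k → ℂ) := by
      funext i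
      by_cases hi : i = i0
      · subst hi; simp
      · simp [hz i hi, Pi.single_apply, hi]
    rw [hγ, hv, Matrix.mulVec_smul]; simp
  exact ⟨x i0, y i0, hxa, hya, hrec α x rfl (fun i hi => (hzero i hi).1),
    hrec β y rfl (fun i hi => (hzero i hi).2)⟩
end

section
/- Let ψ ≠ 0 be a symmetric trilinear form on ℂ^k. If unit vectors α₁, α₂, α₃ maximize |ψ(u₁,u₂,u₃)| over all triples of unit vectors, then α₁, α₂, α₃ are all equal up to complex phases (their complex span is one-dimensional). -/
open Complex

noncomputable def Complex.abs : AbsoluteValue ℂ ℝ where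
  toFun z := ‖z‖
  map_mul' := norm_mul
  nonneg' := norm_nonneg
  eq_zero' _ := norm_eq_zero
  add_le' := norm_add_le

theorem Complex.norm_eq_abs (z : ℂ) : ‖z‖ = Complex.abs z := rfl

@[simp] theorem Complex.abs_ofReal (r : ℝ) : Complex.abs (r : ℂ) = |r| := by
  show ‖(r : ℂ)‖ = |r|
  rw [Complex.norm_real, Real.norm_eq_abs]

@[simp] theorem Complex.abs_conj (z : ℂ) : Complex.abs ((starRingEnd ℂ) z) = Complex.abs z := by
  show ‖(starRingEnd ℂ) z‖ = ‖z‖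
  simp

@[simp] theorem Complex.abs_I : Complex.abs Complex.I = 1 := by
  show ‖Complex.I‖ = 1
  simp

theorem Complex.normSq_eq_abs (z : ℂ) : Complex.normSq z = Complex.abs z ^ 2 := by
  show Complex.normSq z = ‖z‖ ^ 2
  rw [Complex.normSq_eq_norm_sq]

section tri
variable {k : ℕ} (ψ : MultilinearMap ℂ (fun _ : Fin 3 => EuclideanSpace ℂ (Fin k)) ℂ)

lemma upd0 (a b c x : EuclideanSpace ℂ (Fin k)) :
    Function.update ![a,b,c] 0 x = ![x,b,c] := by funext i; fin_cases i <;> simp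
lemma upd1 (a b c x : EuclideanSpace ℂ (Fin k)) :
    Function.update ![a,b,c] 1 x = ![a,x,c] := by funext i; fin_cases i <;> simp
lemma upd2 (a b c x : EuclideanSpace ℂ (Fin k)) :
    Function.update ![a,b,c] 2 x = ![a,b,x] := by funext i; fin_cases i <;> simp

lemma tri_add0 (a b p q : EuclideanSpace ℂ (Fin k)) :
    ψ ![a + b, p, q] = ψ ![a,p,q] + ψ ![b,p,q] := by
  simpa [upd0] using ψ.map_update_add ![a,p,q] 0 a b
lemma tri_add1 (a b p q : EuclideanSpace ℂ (Fin k)) :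
    ψ ![p, a + b, q] = ψ ![p,a,q] + ψ ![p,b,q] := by
  simpa [upd1] using ψ.map_update_add ![p,a,q] 1 a b
lemma tri_add2 (a b p q : EuclideanSpace ℂ (Fin k)) :
    ψ ![p, q, a + b] = ψ ![p,q,a] + ψ ![p,q,b] := by
  simpa [upd2] using ψ.map_update_add ![p,q,a] 2 a b
lemma tri_smul0 (c : ℂ) (a p q : EuclideanSpace ℂ (Fin k)) :
    ψ ![c • a, p, q] = c * ψ ![a,p,q] := by
  simpa [upd0] using ψ.map_update_smul ![a,p,q] 0 c a
lemma tri_smul1 (c : ℂ) (a p q : EuclideanSpace ℂ (Fin k)) :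
    ψ ![p, c • a, q] = c * ψ ![p,a,q] := by
  simpa [upd1] using ψ.map_update_smul ![p,a,q] 1 c a
lemma tri_smul2 (c : ℂ) (a p q : EuclideanSpace ℂ (Fin k)) :
    ψ ![p, q, c • a] = c * ψ ![p,q,a] := by
  simpa [upd2] using ψ.map_update_smul ![p,q,a] 2 c a

lemma tri_s01 (hsymm : ∀ (σ : Equiv.Perm (Fin 3)) (v : Fin 3 → EuclideanSpace ℂ (Fin k)),
      ψ (v ∘ σ) = ψ v) (a b c : EuclideanSpace ℂ (Fin k)) : ψ ![b,a,c] = ψ ![a,b,c] := by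
  have hc : (![a,b,c]) ∘ (Equiv.swap (0:Fin 3) 1) = ![b,a,c] := by
    funext i; fin_cases i <;> simp [Equiv.swap_apply_def]
  rw [← hc, hsymm]
lemma tri_s12 (hsymm : ∀ (σ : Equiv.Perm (Fin 3)) (v : Fin 3 → EuclideanSpace ℂ (Fin k)),
      ψ (v ∘ σ) = ψ v) (a b c : EuclideanSpace ℂ (Fin k)) : ψ ![a,c,b] = ψ ![a,b,c] := by
  have hc : (![a,b,c]) ∘ (Equiv.swap (1:Fin 3) 2) = ![a,c,b] := by
    funext i; fin_cases i <;> simp [Equiv.swap_apply_def]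
  rw [← hc, hsymm]
lemma tri_s02 (hsymm : ∀ (σ : Equiv.Perm (Fin 3)) (v : Fin 3 → EuclideanSpace ℂ (Fin k)),
      ψ (v ∘ σ) = ψ v) (a b c : EuclideanSpace ℂ (Fin k)) : ψ ![c,b,a] = ψ ![a,b,c] := by
  have hc : (![a,b,c]) ∘ (Equiv.swap (0:Fin 3) 2) = ![c,b,a] := by
    funext i; fin_cases i <;> simp [Equiv.swap_apply_def]
  rw [← hc, hsymm]

lemma unit3 {a b c : EuclideanSpace ℂ (Fin k)} (ha : ‖a‖ = 1) (hb : ‖b‖ = 1)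
    (hc : ‖c‖ = 1) : ∀ i, ‖(![a,b,c]) i‖ = 1 := by
  intro i; fin_cases i <;> simpa

end tri

lemma step1 {k : ℕ} (L : EuclideanSpace ℂ (Fin k) →ₗ[ℂ] ℂ) {M : ℝ} (hM : 0 < M)
    {x : EuclideanSpace ℂ (Fin k)} (hx : ‖x‖ = 1) {V : ℂ} (hV : Complex.abs V = M)
    (hLx : L x = V) (hb : ∀ u, ‖u‖ = 1 → Complex.abs (L u) ≤ M) :
    ∀ u, L u = V * (inner ℂ x u : ℂ) := by
  have hb' : ∀ u, Complex.abs (L u) ≤ M * ‖u‖ := by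
    intro u
    rcases eq_or_ne u 0 with rfl | hu
    · simp
    · have hnu : (0:ℝ) < ‖u‖ := norm_pos_iff.mpr hu
      have h1 : ‖(‖u‖:ℂ)⁻¹ • u‖ = 1 := by
        rw [norm_smul]
        simp [abs_of_pos hnu, inv_mul_cancel₀ hnu.ne']
      have h2 := hb _ h1
      rw [map_smul, smul_eq_mul, map_mul, map_inv₀, Complex.abs_ofReal,
        abs_of_pos hnu] at h2
      rw [inv_mul_le_iff₀ hnu] at h2
      linarith [h2]
  intro u
  set w := u - (inner ℂ x u : ℂ) • x with hw
  have hxx : (inner ℂ x x : ℂ) = 1 := by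
    rw [inner_self_eq_norm_sq_to_K, hx]; norm_num
  have hxw : (inner ℂ x w : ℂ) = 0 := by
    rw [hw, inner_sub_right, inner_smul_right, hxx]; ring
  have hLw : L w = 0 := by
    by_contra hc
    set c := Complex.abs (L w) with hcdef
    have hc0 : 0 < c := Complex.abs.pos hc
    have hw0 : w ≠ 0 := by intro h; rw [h, map_zero] at hc; exact hc rfl
    have hnw : (0:ℝ) < ‖w‖ := norm_pos_iff.mpr hw0
    set nw := ‖w‖ with hnwdef
    set ε : ℝ := c / (M * nw ^ 2) with hε
    have hε0 : 0 < ε := by positivity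
    set d : ℂ := (ε : ℂ) * (V / (M:ℂ)) * (starRingEnd ℂ) (L w) / (c:ℂ) with hd
    have hMne : (M:ℂ) ≠ 0 := by exact_mod_cast hM.ne'
    have hcne : ((c:ℝ):ℂ) ≠ 0 := by exact_mod_cast hc0.ne'
    have hconj : (starRingEnd ℂ) (L w) * L w = (((c^2 : ℝ)):ℂ) := by
      rw [mul_comm, Complex.mul_conj, Complex.normSq_eq_abs]
    have hdLw : d * L w = ((ε * c : ℝ):ℂ) * V / (M:ℂ) := by
      rw [hd, div_mul_eq_mul_div, mul_assoc, hconj]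
      push_cast
      field_simp
    have habsd : Complex.abs d = ε := by
      rw [hd]
      rw [map_div₀, map_mul, map_mul, map_div₀, Complex.abs_ofReal, Complex.abs_ofReal,
        Complex.abs_conj, hV, ← hcdef, Complex.abs_ofReal]
      rw [abs_of_pos hε0, abs_of_pos hM, abs_of_pos hc0]
      field_simp
    -- value at x + d • w
    have hval : L (x + d • w) = V * ((1 + ε * c / M : ℝ):ℂ) := by
      rw [map_add, map_smul, hLx, smul_eq_mul, hdLw]
      push_cast
      field_simp
    have habsval : Complex.abs (L (x + d • w)) = M + ε * c := by
      rw [hval, map_mul, hV, Complex.abs_ofReal]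
      have h1 : (0:ℝ) ≤ 1 + ε * c / M := by positivity
      rw [_root_.abs_of_nonneg h1]
      field_simp
    have hnormsq : ‖x + d • w‖ ^ 2 = 1 + ε ^ 2 * nw ^ 2 := by
      rw [@norm_add_sq ℂ]
      rw [inner_smul_right, hxw]
      simp [norm_smul, Complex.norm_eq_abs, habsd, hx, mul_pow, hnwdef]
    have hle := hb' (x + d • w)
    rw [habsval] at hle
    have hsq : (M + ε * c) ^ 2 ≤ M ^ 2 * (1 + ε ^ 2 * nw ^ 2) := by
      have h2 : (M + ε * c) ^ 2 ≤ (M * ‖x + d • w‖) ^ 2 := by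
        apply pow_le_pow_left₀ (by positivity) hle
      calc (M + ε * c) ^ 2 ≤ (M * ‖x + d • w‖) ^ 2 := h2
        _ = M ^ 2 * ‖x + d • w‖ ^ 2 := by ring
        _ = M ^ 2 * (1 + ε ^ 2 * nw ^ 2) := by rw [hnormsq]
    have hkey : M * ε * nw ^ 2 = c := by
      rw [hε]; field_simp
    have h5 : M ^ 2 * (ε ^ 2 * nw ^ 2) = M * ε * (M * ε * nw ^ 2) := by ring
    rw [hkey] at h5
    nlinarith [hsq, h5, mul_pos (mul_pos hM hε0) hc0, sq_nonneg (ε * c)]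
  have : u = w + (inner ℂ x u : ℂ) • x := by rw [hw]; abel
  rw [this, map_add, map_smul, hLw, hLx, smul_eq_mul,
    inner_add_right, inner_smul_right, hxw, hxx]
  ring

lemma lemB{k : ℕ} (ψ : MultilinearMap ℂ (fun _ : Fin 3 => EuclideanSpace ℂ (Fin k)) ℂ)
    (hsymm : ∀ (σ : Equiv.Perm (Fin 3)) (v : Fin 3 → EuclideanSpace ℂ (Fin k)),
      ψ (v ∘ σ) = ψ v)
    {M : ℝ} (hM : 0 < M)
    (hball : ∀ u : Fin 3 → EuclideanSpace ℂ (Fin k), (∀ i, ‖u i‖ = 1) →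
      Complex.abs (ψ u) ≤ M)
    (x y z : EuclideanSpace ℂ (Fin k)) (hx : ‖x‖ = 1) (hy : ‖y‖ = 1) (hz : ‖z‖ = 1)
    (hxyz : ψ ![x,y,z] = (M:ℂ)) :
    ∀ u, ψ ![x,x,u] = (M:ℂ) * (starRingEnd ℂ) (inner ℂ x y) * (inner ℂ z u : ℂ) := by
  have habsM : Complex.abs ((M:ℝ):ℂ) = M := by
    rw [Complex.abs_ofReal, abs_of_pos hM]
  have s01 : ∀ a b c : EuclideanSpace ℂ (Fin k), ψ ![b,a,c] = ψ ![a,b,c] :=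
    tri_s01 ψ hsymm
  set t : ℂ := (inner ℂ x y : ℂ) with ht
  have I1 : ∀ u, ψ ![u,y,z] = (M:ℂ) * (inner ℂ x u : ℂ) := by
    have := step1 (ψ.toLinearMap ![x,y,z] 0) hM hx (V := ((M:ℝ):ℂ)) habsM
      (by simp [upd0, hxyz]) (fun u hu => by
        simp only [MultilinearMap.toLinearMap_apply, upd0]
        exact hball _ (unit3 hu hy hz))
    intro u
    simpa [upd0] using this u
  have I2 : ∀ u, ψ ![x,u,z] = (M:ℂ) * (inner ℂ y u : ℂ) := by
    have := step1 (ψ.toLinearMap ![x,y,z] 1) hM hy (V := ((M:ℝ):ℂ)) habsM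
      (by simp [upd1, hxyz]) (fun u hu => by
        simp only [MultilinearMap.toLinearMap_apply, upd1]
        exact hball _ (unit3 hx hu hz))
    intro u
    simpa [upd1] using this u
  have I3 : ∀ u, ψ ![x,y,u] = (M:ℂ) * (inner ℂ z u : ℂ) := by
    have := step1 (ψ.toLinearMap ![x,y,z] 2) hM hz (V := ((M:ℝ):ℂ)) habsM
      (by simp [upd2, hxyz]) (fun u hu => by
        simp only [MultilinearMap.toLinearMap_apply, upd2]
        exact hball _ (unit3 hx hy hu))
    intro u
    simpa [upd2] using this u
  have hxxz : ψ ![x,x,z] = (M:ℂ) * (starRingEnd ℂ) t := by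
    rw [I2 x, ht, ← inner_conj_symm]
  have hyyz : ψ ![y,y,z] = (M:ℂ) * t := by rw [I1 y, ht]
  have add0 : ∀ a b p q : EuclideanSpace ℂ (Fin k),
      ψ ![a + b, p, q] = ψ ![a,p,q] + ψ ![b,p,q] := by
    intro a b p q
    simpa [upd0] using ψ.map_update_add ![a,p,q] 0 a b
  have add1 : ∀ a b p q : EuclideanSpace ℂ (Fin k),
      ψ ![p, a + b, q] = ψ ![p,a,q] + ψ ![p,b,q] := by
    intro a b p q
    simpa [upd1] using ψ.map_update_add ![p,a,q] 1 a b
  have smul0 : ∀ (c : ℂ) (a p q : EuclideanSpace ℂ (Fin k)),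
      ψ ![c • a, p, q] = c * ψ ![a,p,q] := by
    intro c a p q
    simpa [upd0] using ψ.map_update_smul ![a,p,q] 0 c a
  have smul1 : ∀ (c : ℂ) (a p q : EuclideanSpace ℂ (Fin k)),
      ψ ![p, c • a, q] = c * ψ ![p,a,q] := by
    intro c a p q
    simpa [upd1] using ψ.map_update_smul ![p,a,q] 1 c a
  have key : ∀ c : ℂ, Complex.abs c = 1 → 0 < 2 + 2 * (c * t).re → ∀ u,
      ψ ![x,x,u] + c ^ 2 * ψ ![y,y,u]
        = (M:ℂ) * (starRingEnd ℂ) t * (inner ℂ z u : ℂ)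
          + (M:ℂ) * t * c ^ 2 * (inner ℂ z u : ℂ) := by
    intro c hc hden
    have hcc : c * (starRingEnd ℂ) c = 1 := by
      rw [Complex.mul_conj, Complex.normSq_eq_abs, hc]; norm_num
    set n : ℝ := Real.sqrt (2 + 2 * (c * t).re) with hn
    have hn0 : 0 < n := Real.sqrt_pos.mpr hden
    have hn2 : (n:ℝ) ^ 2 = 2 + 2 * (c * t).re := Real.sq_sqrt hden.le
    have hnC : ((n:ℝ):ℂ) ≠ 0 := by exact_mod_cast hn0.ne'
    set v : EuclideanSpace ℂ (Fin k) := ((n:ℝ):ℂ)⁻¹ • (x + c • y) with hv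
    have hnormxy : ‖x + c • y‖ ^ 2 = 2 + 2 * (c * t).re := by
      rw [@norm_add_sq ℂ]
      rw [inner_smul_right, norm_smul, hx, hy]
      simp [Complex.norm_eq_abs, hc, ← ht]
      ring
    have hvnorm : ‖v‖ = 1 := by
      rw [hv, norm_smul]
      have h1 : ‖x + c • y‖ = n := by
        rw [hn, ← hnormxy]
        exact (Real.sqrt_sq (norm_nonneg _)).symm
      simp [h1, Complex.norm_eq_abs, abs_of_pos hn0, inv_mul_cancel₀ hn0.ne']
    have hn2C : ((n:ℝ):ℂ) * ((n:ℝ):ℂ)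
        = 2 + c * t + (starRingEnd ℂ) c * (starRingEnd ℂ) t := by
      have h1 : ((n:ℝ):ℂ) * ((n:ℝ):ℂ) = (((n ^ 2 : ℝ)):ℂ) := by push_cast; ring
      rw [h1, hn2, ← map_mul]
      have h2 := Complex.add_conj (c * t)
      push_cast at h2 ⊢
      linear_combination -h2
    have hexp : ∀ w, ψ ![x + c • y, x + c • y, w]
        = ψ ![x,x,w] + c * ψ ![x,y,w] + c * ψ ![y,x,w] + c ^ 2 * ψ ![y,y,w] := by
      intro w
      rw [add0, add1, add1, smul0, smul0, smul1, smul1]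
      ring
    have hvvz : ψ ![v,v,z] = (M:ℂ) * c := by
      have hX : ψ ![x + c • y, x + c • y, z]
          = (M:ℂ) * c * (((n:ℝ):ℂ) * ((n:ℝ):ℂ)) := by
        rw [hexp, hxxz, hyyz, s01 x y z, hxyz, hn2C]
        linear_combination (-(M:ℂ) * (starRingEnd ℂ) t) * hcc
      rw [hv, smul0, smul1, hX]
      field_simp
    have J : ∀ u, ψ ![v,v,u] = (M:ℂ) * c * (inner ℂ z u : ℂ) := by
      have := step1 (ψ.toLinearMap ![v,v,z] 2) hM hz (V := ((M:ℝ):ℂ) * c)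
        (by rw [map_mul, habsM, hc, mul_one])
        (by simp [upd2, hvvz])
        (fun u hu => by
          simp only [MultilinearMap.toLinearMap_apply, upd2]
          exact hball _ (unit3 hvnorm hvnorm hu))
      intro u
      simpa [upd2] using this u
    have hscale : ∀ u, ψ ![x + c • y, x + c • y, u]
        = ((n:ℝ):ℂ) * ((n:ℝ):ℂ) * ((M:ℂ) * c * (inner ℂ z u : ℂ)) := by
      intro u
      have hxyv : x + c • y = ((n:ℝ):ℂ) • v := by rw [hv, smul_inv_smul₀ hnC]
      rw [hxyv, smul0, smul1, J u]
      ring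
    intro u
    have h1 := hscale u
    rw [hexp, I3, s01 x y u, I3] at h1
    linear_combination h1 + ((M:ℂ) * c * (inner ℂ z u : ℂ)) * hn2C
      + ((M:ℂ) * (starRingEnd ℂ) t * (inner ℂ z u : ℂ)) * hcc
  -- choose the two phases
  obtain ⟨c₁, hc₁, hden₁, hsq₁⟩ :
      ∃ c : ℂ, Complex.abs c = 1 ∧ 0 < 2 + 2 * (c * t).re ∧ c ^ 2 = 1 := by
    by_cases h : -1 < t.re
    · exact ⟨1, by simp, by simpa using by linarith, by norm_num⟩
    · refine ⟨-1, by simp, ?_, by norm_num⟩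
      push_neg at h
      have : ((-1 : ℂ) * t).re = -t.re := by simp
      rw [this]; linarith
  obtain ⟨c₂, hc₂, hden₂, hsq₂⟩ :
      ∃ c : ℂ, Complex.abs c = 1 ∧ 0 < 2 + 2 * (c * t).re ∧ c ^ 2 = -1 := by
    by_cases h : t.im < 1
    · refine ⟨Complex.I, by simp, ?_, by simp [Complex.I_sq]⟩
      have : (Complex.I * t).re = -t.im := by simp [Complex.mul_re]
      rw [this]; linarith
    · refine ⟨-Complex.I, by simp, ?_, by simp [Complex.I_sq]⟩
      push_neg at h
      have : ((-Complex.I) * t).re = t.im := by simp [Complex.mul_re]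
      rw [this]; linarith
  intro u
  have k1 := key c₁ hc₁ hden₁ u
  have k2 := key c₂ hc₂ hden₂ u
  rw [hsq₁] at k1
  rw [hsq₂] at k2
  linear_combination (1/2 : ℂ) * k1 + (1/2 : ℂ) * k2

/-- A nonzero symmetric trilinear form on ℂ^k maximized at unit vectors
α₁, α₂, α₃ forces the αᵢ to be equal up to phases. -/
theorem stmt_4 (k : ℕ)
    (ψ : MultilinearMap ℂ (fun _ : Fin 3 => EuclideanSpace ℂ (Fin k)) ℂ)
    (hψ : ψ ≠ 0)
    (hsymm : ∀ (σ : Equiv.Perm (Fin 3)) (v : Fin 3 → EuclideanSpace ℂ (Fin k)),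
      ψ (v ∘ σ) = ψ v)
    (α : Fin 3 → EuclideanSpace ℂ (Fin k))
    (hα : ∀ i, ‖α i‖ = 1)
    (hmax : ∀ u : Fin 3 → EuclideanSpace ℂ (Fin k),
      (∀ i, ‖u i‖ = 1) → ‖ψ u‖ ≤ ‖ψ α‖) :
    ∀ i j : Fin 3, ∃ c : ℂ, ‖c‖ = 1 ∧ α i = c • α j := by
  change ∀ u : Fin 3 → EuclideanSpace ℂ (Fin k),
    (∀ i, ‖u i‖ = 1) → Complex.abs (ψ u) ≤ Complex.abs (ψ α) at hmax
  show ∀ i j : Fin 3, ∃ c : ℂ, Complex.abs c = 1 ∧ α i = c • α j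
  classical
  set M : ℝ := Complex.abs (ψ α) with hMdef
  -- M is positive
  have hM : 0 < M := by
    rcases (Complex.abs.nonneg (ψ α)).lt_or_eq with h | h
    · exact h
    · exfalso; apply hψ
      have hzero : ∀ u : Fin 3 → EuclideanSpace ℂ (Fin k),
          (∀ i, ‖u i‖ = 1) → ψ u = 0 := by
        intro u hu
        have h1 := hmax u hu
        rw [hMdef, ← h] at h1
        exact Complex.abs.eq_zero.mp (le_antisymm h1 (Complex.abs.nonneg _))
      refine MultilinearMap.ext fun v => ?_
      simp only [MultilinearMap.zero_apply]
      by_cases hv : ∃ i, v i = 0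
      · obtain ⟨i, hi⟩ := hv
        exact ψ.map_coord_zero i hi
      · push_neg at hv
        have hvn : ∀ i, ((‖v i‖:ℝ):ℂ) ≠ 0 := fun i => by
          simpa using norm_ne_zero_iff.mpr (hv i)
        have hcomp : v = fun i => ((‖v i‖:ℝ):ℂ) • (((‖v i‖:ℝ):ℂ)⁻¹ • v i) := by
          funext i; rw [smul_inv_smul₀ (hvn i)]
        rw [hcomp, ψ.map_smul_univ]
        rw [hzero _ (fun i => ?_)]
        · simp
        · rw [norm_smul, norm_inv]
          have : ‖((‖v i‖:ℝ):ℂ)‖ = ‖v i‖ := by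
            simp [Complex.norm_eq_abs]
          rw [this]
          exact inv_mul_cancel₀ (norm_ne_zero_iff.mpr (hv i))
  have hMC : ((M:ℝ):ℂ) ≠ 0 := by exact_mod_cast hM.ne'
  have hball : ∀ u : Fin 3 → EuclideanSpace ℂ (Fin k), (∀ i, ‖u i‖ = 1) →
      Complex.abs (ψ u) ≤ M := hmax
  -- phase-normalized maximizer
  set p : ℂ := ψ α / (M:ℂ) with hpdef
  have hψα : ψ α = (M:ℂ) * p := by rw [hpdef]; field_simp
  have hp : Complex.abs p = 1 := by
    rw [hpdef, map_div₀, Complex.abs_ofReal, abs_of_pos hM, ← hMdef, div_self hM.ne']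
  have hpC : p ≠ 0 := by intro h; rw [h] at hp; simp at hp
  set x : EuclideanSpace ℂ (Fin k) := (starRingEnd ℂ) p • α 0 with hxdef
  set y : EuclideanSpace ℂ (Fin k) := α 1 with hydef
  set z : EuclideanSpace ℂ (Fin k) := α 2 with hzdef
  have hαvec : α = ![α 0, α 1, α 2] := by funext i; fin_cases i <;> rfl
  have hx : ‖x‖ = 1 := by
    rw [hxdef, norm_smul]
    simp [Complex.norm_eq_abs, hp, hα 0]
  have hy : ‖y‖ = 1 := hα 1
  have hz : ‖z‖ = 1 := hα 2
  have hxyz : ψ ![x, y, z] = (M:ℝ) := by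
    rw [hxdef, hydef, hzdef, tri_smul0, ← hαvec, hψα]
    have : (starRingEnd ℂ) p * p = 1 := by
      rw [mul_comm, Complex.mul_conj, Complex.normSq_eq_abs, hp]; norm_num
    rw [mul_comm ((M:ℂ)) p, ← mul_assoc, this, one_mul]
  -- the six instances of lemB
  have hMval : ∀ a b c : EuclideanSpace ℂ (Fin k), ψ ![a,b,c] = ψ ![x,y,z] →
      ψ ![a,b,c] = ((M:ℝ):ℂ) := fun a b c h => by rw [h, hxyz]
  have P_xzy : ψ ![x,z,y] = ((M:ℝ):ℂ) := by rw [tri_s12 ψ hsymm, hxyz]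
  have P_yxz : ψ ![y,x,z] = ((M:ℝ):ℂ) := by rw [tri_s01 ψ hsymm, hxyz]
  have P_zyx : ψ ![z,y,x] = ((M:ℝ):ℂ) := by rw [tri_s02 ψ hsymm, hxyz]
  have P_yzx : ψ ![y,z,x] = ((M:ℝ):ℂ) := by
    rw [tri_s01 ψ hsymm, tri_s02 ψ hsymm, hxyz]
  have P_zxy : ψ ![z,x,y] = ((M:ℝ):ℂ) := by
    rw [tri_s02 ψ hsymm, tri_s01 ψ hsymm, hxyz]
  have B1 := lemB ψ hsymm hM hball x y z hx hy hz hxyz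
  have B2 := lemB ψ hsymm hM hball x z y hx hz hy P_xzy
  have B3 := lemB ψ hsymm hM hball y x z hy hx hz P_yxz
  have B4 := lemB ψ hsymm hM hball y z x hy hz hx P_yzx
  have B5 := lemB ψ hsymm hM hball z x y hz hx hy P_zxy
  have B6 := lemB ψ hsymm hM hball z y x hz hy hx P_zyx
  set t : ℂ := (inner ℂ x y : ℂ) with ht
  set s : ℂ := (inner ℂ x z : ℂ) with hs
  set r : ℂ := (inner ℂ y z : ℂ) with hr
  -- vector equations
  have e1 : t • z = s • y := by
    rw [← sub_eq_zero, ← inner_self_eq_zero (𝕜 := ℂ)]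
    have h : ∀ u, (inner ℂ (t • z - s • y) u : ℂ) = 0 := by
      intro u
      rw [inner_sub_left, inner_smul_left, inner_smul_left]
      have h1 := (B1 u).symm.trans (B2 u)
      have h3 : ((M:ℝ):ℂ) * ((starRingEnd ℂ) t * (inner ℂ z u : ℂ))
          = ((M:ℝ):ℂ) * ((starRingEnd ℂ) s * (inner ℂ y u : ℂ)) := by
        linear_combination h1
      have h4 := mul_left_cancel₀ hMC h3
      linear_combination h4
    exact h _
  have e2 : (starRingEnd ℂ) t • z = r • x := by
    rw [← sub_eq_zero, ← inner_self_eq_zero (𝕜 := ℂ)]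
    have h : ∀ u, (inner ℂ ((starRingEnd ℂ) t • z - r • x) u : ℂ) = 0 := by
      intro u
      rw [inner_sub_left, inner_smul_left, inner_smul_left, Complex.conj_conj]
      have h1 := (B3 u).symm.trans (B4 u)
      have hcongr : (starRingEnd ℂ) (inner ℂ y x : ℂ) = t := by
        rw [inner_conj_symm]
      rw [hcongr] at h1
      have h3 : ((M:ℝ):ℂ) * (t * (inner ℂ z u : ℂ))
          = ((M:ℝ):ℂ) * ((starRingEnd ℂ) r * (inner ℂ x u : ℂ)) := by
        linear_combination h1
      have h4 := mul_left_cancel₀ hMC h3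
      linear_combination h4
    exact h _
  -- norms of the overlaps agree
  have habs_ts : Complex.abs t = Complex.abs s := by
    have h := congrArg norm e1
    rw [norm_smul, norm_smul, hz, hy] at h
    simpa [Complex.norm_eq_abs] using h
  have habs_tr : Complex.abs t = Complex.abs r := by
    have h := congrArg norm e2
    rw [norm_smul, norm_smul, hz, hx] at h
    simpa [Complex.norm_eq_abs] using h
  by_cases ht0 : t = 0
  · -- all three orthogonal : contradiction
    exfalso
    have hs0 : s = 0 := by
      have : Complex.abs s = 0 := by rw [← habs_ts, ht0]; simp
      exact Complex.abs.eq_zero.mp this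
    have hr0 : r = 0 := by
      have : Complex.abs r = 0 := by rw [← habs_tr, ht0]; simp
      exact Complex.abs.eq_zero.mp this
    have hxx0 : ∀ u, ψ ![x,x,u] = 0 := fun u => by rw [B1 u, ht0]; simp
    have hyy0 : ∀ u, ψ ![y,y,u] = 0 := fun u => by
      have h1 := B3 u
      have hcongr : (starRingEnd ℂ) (inner ℂ y x : ℂ) = t := by rw [inner_conj_symm]
      rw [hcongr, ht0] at h1
      simpa using h1
    have hzz0 : ∀ u, ψ ![z,z,u] = 0 := fun u => by
      have h1 := B5 u
      have hcongr : (starRingEnd ℂ) (inner ℂ z x : ℂ) = s := by rw [inner_conj_symm]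
      rw [hcongr, hs0] at h1
      simpa using h1
    have zp0 : ∀ a u : EuclideanSpace ℂ (Fin k), (∀ w, ψ ![a,a,w] = 0) →
        ψ ![a,u,a] = 0 := fun a u h => by rw [tri_s12 ψ hsymm]; exact h u
    have zp1 : ∀ a u : EuclideanSpace ℂ (Fin k), (∀ w, ψ ![a,a,w] = 0) →
        ψ ![u,a,a] = 0 := fun a u h => by rw [tri_s02 ψ hsymm]; exact h u
    have cell : ∀ a b : EuclideanSpace ℂ (Fin k),
        ψ ![a, b, x + y + z] = ψ ![a,b,x] + ψ ![a,b,y] + ψ ![a,b,z] := by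
      intro a b; rw [tri_add2, tri_add2]
    have row : ∀ a : EuclideanSpace ℂ (Fin k),
        ψ ![a, x + y + z, x + y + z]
          = ψ ![a,x,x] + ψ ![a,x,y] + ψ ![a,x,z]
            + (ψ ![a,y,x] + ψ ![a,y,y] + ψ ![a,y,z])
            + (ψ ![a,z,x] + ψ ![a,z,y] + ψ ![a,z,z]) := by
      intro a; rw [tri_add1, tri_add1, cell, cell, cell]
    have hvvv : ψ ![x+y+z, x+y+z, x+y+z] = ((M:ℝ):ℂ) * 6 := by
      rw [tri_add0, tri_add0, row, row, row]
      simp only [hxx0, hyy0, hzz0, zp0 x y hxx0, zp1 y x hyy0, zp0 x z hxx0,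
        zp1 z x hzz0, zp1 x y hxx0, zp0 y x hyy0, zp0 y z hyy0, zp1 z y hzz0,
        zp1 x z hxx0, zp0 z x hzz0, zp1 y z hyy0, zp0 z y hzz0,
        hxyz, P_xzy, P_yxz, P_yzx, P_zxy, P_zyx]
      ring
    have hxy0 : (inner ℂ x y : ℂ) = 0 := by rw [← ht]; exact ht0
    have hxz0 : (inner ℂ x z : ℂ) = 0 := by rw [← hs]; exact hs0
    have hyz0 : (inner ℂ y z : ℂ) = 0 := by rw [← hr]; exact hr0
    have hnv : ‖x + y + z‖ ^ 2 = 3 := by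
      rw [@norm_add_sq ℂ, @norm_add_sq ℂ, inner_add_left, hxy0, hxz0, hyz0,
        hx, hy, hz]
      simp
      norm_num
    set q : ℝ := Real.sqrt 3 with hqdef
    have hq0 : 0 < q := Real.sqrt_pos.mpr (by norm_num)
    have hq2 : q ^ 2 = 3 := Real.sq_sqrt (by norm_num)
    have hnv' : ‖x + y + z‖ = q := by
      rw [hqdef, ← hnv]
      exact (Real.sqrt_sq (norm_nonneg _)).symm
    have hqC : ((q:ℝ):ℂ) ≠ 0 := by exact_mod_cast hq0.ne'
    set w : EuclideanSpace ℂ (Fin k) := ((q:ℝ):ℂ)⁻¹ • (x + y + z) with hwdef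
    have hw : ‖w‖ = 1 := by
      rw [hwdef, norm_smul, hnv']
      simp [Complex.norm_eq_abs, abs_of_pos hq0, inv_mul_cancel₀ hq0.ne']
    have hval : ψ ![w,w,w] = (((6 * M / q ^ 3 : ℝ)):ℂ) := by
      rw [hwdef, tri_smul0, tri_smul1, tri_smul2, hvvv]
      push_cast
      field_simp
    have hineq := hball ![w,w,w] (unit3 hw hw hw)
    rw [hval, Complex.abs_ofReal] at hineq
    have h6 : 6 * M / q ^ 3 ≤ M := by
      have habs : |6 * M / q ^ 3| = 6 * M / q ^ 3 := abs_of_pos (by positivity)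
      linarith [habs ▸ hineq]
    have h7 : 6 * M ≤ M * q ^ 3 := by
      rw [div_le_iff₀ (by positivity)] at h6
      linarith
    have hqlt : q < 2 := by
      rw [hqdef]
      exact (Real.sqrt_lt' (by norm_num)).mpr (by norm_num)
    have hq3 : q ^ 3 = 3 * q := by rw [pow_succ, hq2]
    have h9 : 2 ≤ q := by
      have h10 : (3 * M) * 2 ≤ (3 * M) * q := by rw [hq3] at h7; linarith
      exact le_of_mul_le_mul_left h10 (by linarith)
    linarith
  · -- parallel case
    have hs0 : s ≠ 0 := fun h => ht0 (Complex.abs.eq_zero.mp (by rw [habs_ts, h]; simp))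
    have hr0 : r ≠ 0 := fun h => ht0 (Complex.abs.eq_zero.mp (by rw [habs_tr, h]; simp))
    have habt : Complex.abs t ≠ 0 := fun h => ht0 (Complex.abs.eq_zero.mp h)
    have hy2 : y = (s⁻¹ * t) • z := by
      have h := congrArg (fun w => s⁻¹ • w) e1
      simp only [smul_smul, inv_mul_cancel₀ hs0, one_smul] at h
      exact h.symm
    have hx2 : x = (r⁻¹ * (starRingEnd ℂ) t) • z := by
      have h := congrArg (fun w => r⁻¹ • w) e2
      simp only [smul_smul, inv_mul_cancel₀ hr0, one_smul] at h
      exact h.symm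
    have hα0 : α 0 = p • x := by
      rw [hxdef, smul_smul]
      have hpp : p * (starRingEnd ℂ) p = 1 := by
        rw [Complex.mul_conj, Complex.normSq_eq_abs, hp]; norm_num
      rw [hpp, one_smul]
    have key : ∀ i : Fin 3, ∃ c : ℂ, Complex.abs c = 1 ∧ α i = c • α 2 := by
      intro i
      fin_cases i
      · refine ⟨p * (r⁻¹ * (starRingEnd ℂ) t), ?_, ?_⟩
        · rw [map_mul, map_mul, map_inv₀, Complex.abs_conj, hp, ← habs_tr,
            inv_mul_cancel₀ habt]
          norm_num
        · show α 0 = _ • α 2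
          rw [hα0, hx2, smul_smul, hzdef]
      · refine ⟨s⁻¹ * t, ?_, ?_⟩
        · rw [map_mul, map_inv₀, ← habs_ts, inv_mul_cancel₀ habt]
        · show α 1 = _ • α 2
          rw [← hydef, ← hzdef, hy2]
      · exact ⟨1, by simp, by simp⟩
    intro i j
    obtain ⟨ci, hci, hi⟩ := key i
    obtain ⟨cj, hcj, hj⟩ := key j
    have hcj0 : cj ≠ 0 := fun h => by rw [h] at hcj; simp at hcj
    refine ⟨ci * cj⁻¹, ?_, ?_⟩
    · rw [map_mul, map_inv₀, hci, hcj]; norm_num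
    · rw [hi, hj, smul_smul, mul_assoc, inv_mul_cancel₀ hcj0, mul_one]
end

section
/- Let N ≥ 3 and let ψ ≠ 0 be a symmetric N-linear form on ℂ^k. If unit vectors α₁,…,α_N maximize |ψ(u₁,…,u_N)| over all N-tuples of unit vectors, then all α_i are equal up to complex phases, i.e., span_ℂ{α₁,…,α_N} is one-dimensional. -/
open scoped InnerProductSpace
open Function

namespace Stmt5Aux

variable {N k : ℕ}

theorem swap_eq' (ψ : MultilinearMap ℂ (fun _ : Fin N => EuclideanSpace ℂ (Fin k)) ℂ)
    (hsymm : ∀ (σ : Equiv.Perm (Fin N)) (v : Fin N → EuclideanSpace ℂ (Fin k)),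
      ψ (v ∘ σ) = ψ v)
    {i j : Fin N} (hij : i ≠ j) (u : Fin N → EuclideanSpace ℂ (Fin k))
    (x y : EuclideanSpace ℂ (Fin k)) :
    ψ (update (update u i x) j y) = ψ (update (update u i y) j x) := by
  have h := hsymm (Equiv.swap i j) (update (update u i x) j y)
  rw [← h]
  congr 1
  funext m
  simp only [Function.comp_apply]
  rcases eq_or_ne m i with rfl | hmi
  · rw [Equiv.swap_apply_left, update_self, update_of_ne hij, update_self]
  rcases eq_or_ne m j with rfl | hmj
  · rw [Equiv.swap_apply_right, update_of_ne hij, update_self, update_self]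
  · rw [Equiv.swap_apply_of_ne_of_ne hmi hmj, update_of_ne hmj, update_of_ne hmi,
      update_of_ne hmj, update_of_ne hmi]

theorem first_order (ψ : MultilinearMap ℂ (fun _ : Fin N => EuclideanSpace ℂ (Fin k)) ℂ)
    (M : ℝ) (hM : 0 < M)
    (hbound : ∀ u : Fin N → EuclideanSpace ℂ (Fin k), (∀ i, ‖u i‖ = 1) →
      ‖ψ u‖ ≤ M)
    (u : Fin N → EuclideanSpace ℂ (Fin k)) (hu : ∀ i, ‖u i‖ = 1)
    (huM : ‖ψ u‖ = M)
    (m : Fin N) (x : EuclideanSpace ℂ (Fin k)) :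
    ψ (update u m x) = ψ u * ⟪u m, x⟫_ℂ := by
  have hM0 : (M:ℂ) ≠ 0 := by exact_mod_cast hM.ne'
  -- scaling bound
  have hL : ∀ y : EuclideanSpace ℂ (Fin k),
      ‖ψ (update u m y)‖ ≤ M * ‖y‖ := by
    intro y
    rcases eq_or_ne y 0 with rfl | hy
    · rw [ψ.map_coord_zero m (by simp)]; simp
    · have hyn : (0:ℝ) < ‖y‖ := norm_pos_iff.mpr hy
      have h1 : ∀ i, ‖update u m (((‖y‖ : ℂ))⁻¹ • y) i‖ = 1 := by
        intro i
        rcases eq_or_ne i m with rfl | him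
        · rw [update_self, norm_smul]
          simp [hyn.ne']
        · rw [update_of_ne him]; exact hu i
      have h2 := hbound _ h1
      rw [ψ.map_update_smul, smul_eq_mul, norm_mul] at h2
      have h3 : ‖((‖y‖:ℂ))⁻¹‖ = ‖y‖⁻¹ := by simp
      rw [h3] at h2
      calc ‖ψ (update u m y)‖
          = ‖y‖ * (‖y‖⁻¹ * ‖ψ (update u m y)‖) := by field_simp
        _ ≤ ‖y‖ * M := mul_le_mul_of_nonneg_left h2 hyn.le
        _ = M * ‖y‖ := mul_comm _ _
  -- orthogonal directions vanish
  have hperp : ∀ y, ⟪u m, y⟫_ℂ = 0 → ψ (update u m y) = 0 := by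
    intro y hy
    by_contra hLy
    set v := ψ u with hv
    set q := ‖ψ (update u m y)‖ with hqdef
    have hq : 0 < q := norm_pos_iff.mpr hLy
    have hqb : q ≤ M * ‖y‖ := hL y
    set b := M * ‖y‖ with hbdef
    have hb : 0 < b := lt_of_lt_of_le hq hqb
    have hD : 0 < b^2 - q^2 + 1 := by nlinarith
    set t := M * q / (b^2 - q^2 + 1) with htdef
    have ht : 0 < t := div_pos (mul_pos hM hq) hD
    have htD : t * (b^2 - q^2 + 1) = M * q := by
      rw [htdef]; field_simp
    set c : ℂ := (v * (q:ℂ)) / ((M:ℂ) * ψ (update u m y)) with hcdef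
    have hcabs : ‖c‖ = 1 := by
      have e1 : ‖v * (q:ℂ)‖ = M * q := by
        rw [norm_mul, huM, Complex.norm_real, Real.norm_eq_abs, abs_of_pos hq]
      have e2 : ‖(M:ℂ) * ψ (update u m y)‖ = M * q := by
        rw [norm_mul, Complex.norm_real, Real.norm_eq_abs, abs_of_pos hM, ← hqdef]
      rw [hcdef, norm_div, e1, e2, div_self (by positivity)]
    have hcLy : c * ψ (update u m y) = v * (q:ℂ) / (M:ℂ) := by
      rw [hcdef]; field_simp
    set w : EuclideanSpace ℂ (Fin k) := u m + (((t:ℝ):ℂ) * c) • y with hwdef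
    have hLw : ψ (update u m w) = v * (((1 + t*q/M : ℝ)):ℂ) := by
      rw [hwdef, ψ.map_update_add, update_eq_self, ψ.map_update_smul, smul_eq_mul,
        mul_assoc, hcLy]
      push_cast
      field_simp
      ring
    have habsw : ‖ψ (update u m w)‖ = M + t*q := by
      rw [hLw, norm_mul, huM, Complex.norm_real, Real.norm_eq_abs,
        abs_of_pos (by positivity : (0:ℝ) < 1 + t*q/M)]
      field_simp
    have hwnorm : ‖w‖^2 = 1 + t^2*‖y‖^2 := by
      rw [hwdef, @norm_add_sq ℂ _ _ _ _ (u m) _, inner_smul_right, hy, mul_zero,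
        norm_smul, hu m]
      have : ‖((t:ℝ):ℂ) * c‖ = t := by
        rw [norm_mul, hcabs, Complex.norm_real, Real.norm_eq_abs, abs_of_pos ht, mul_one]
      rw [this]
      simp
      ring
    have hineq := hL w
    rw [habsw] at hineq
    have hsq : (M + t*q)^2 ≤ M^2 * (1 + t^2*‖y‖^2) := by
      calc (M + t*q)^2 ≤ (M*‖w‖)^2 := by
            apply pow_le_pow_left₀ (by positivity) hineq
        _ = M^2 * ‖w‖^2 := by ring
        _ = M^2 * (1 + t^2*‖y‖^2) := by rw [hwnorm]
    have hb2 : b^2 = M^2 * ‖y‖^2 := by rw [hbdef]; ring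
    nlinarith [mul_pos ht ht, mul_pos (mul_pos hM ht) hq, hsq, htD, hb2]
  -- decomposition
  have huu : ⟪u m, u m⟫_ℂ = 1 := by
    rw [inner_self_eq_norm_sq_to_K, hu m]; norm_num
  have hy : ⟪u m, x - ⟪u m, x⟫_ℂ • u m⟫_ℂ = 0 := by
    rw [inner_sub_right, inner_smul_right, huu, mul_one, sub_self]
  have h0 := hperp _ hy
  have hx : x = ⟪u m, x⟫_ℂ • u m + (x - ⟪u m, x⟫_ℂ • u m) := by
    rw [add_sub_cancel]
  calc ψ (update u m x)
      = ψ (update u m (⟪u m, x⟫_ℂ • u m + (x - ⟪u m, x⟫_ℂ • u m))) := by rw [← hx]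
    _ = ⟪u m, x⟫_ℂ * ψ (update u m (u m)) + ψ (update u m (x - ⟪u m, x⟫_ℂ • u m)) := by
        rw [ψ.map_update_add, ψ.map_update_smul, smul_eq_mul]
    _ = ψ u * ⟪u m, x⟫_ℂ := by rw [update_eq_self, h0, add_zero, mul_comm]

theorem omega_identity (ω s : ℂ) (hω : ‖ω‖ = 1) (d : ℝ)
    (hd : d = 2 + 2 * (ω * s).re) :
    (starRingEnd ℂ) s + 2*ω + ω^2*s = ω * (d:ℂ) := by
  have h1 : ω * (starRingEnd ℂ) ω = 1 := by
    rw [Complex.mul_conj]; norm_cast; simp [Complex.normSq_eq_norm_sq, hω]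
  have h2 : ((2 * (ω * s).re : ℝ) : ℂ) = ω * s + (starRingEnd ℂ) ω * (starRingEnd ℂ) s := by
    rw [← map_mul, Complex.add_conj]
  have hd' : (d:ℂ) = 2 + (ω * s + (starRingEnd ℂ) ω * (starRingEnd ℂ) s) := by
    rw [hd]; push_cast [h2]; ring
  rw [hd']
  linear_combination (-(starRingEnd ℂ) s) * h1

theorem expand_zz (ψ : MultilinearMap ℂ (fun _ : Fin N => EuclideanSpace ℂ (Fin k)) ℂ)
    (hsymm : ∀ (σ : Equiv.Perm (Fin N)) (v : Fin N → EuclideanSpace ℂ (Fin k)),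
      ψ (v ∘ σ) = ψ v)
    {i j : Fin N} (hij : i ≠ j)
    (W : Fin N → EuclideanSpace ℂ (Fin k)) (z : EuclideanSpace ℂ (Fin k)) (c' ω : ℂ)
    (hz : z = c' • (W i + ω • W j)) :
    ψ (update (update W i z) j z)
      = c'^2 * (ψ (update W j (W i)) + 2*ω*(ψ W) + ω^2 * ψ (update W i (W j))) := by
  have hWj' : (update W i z) j = W j := update_of_ne hij.symm _ _
  have e0 : ψ (update (update W i z) j z)
      = c' * (ψ (update (update W i z) j (W i))
          + ω * ψ (update (update W i z) j (W j))) := by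
    conv_lhs => rw [show (update (update W i z) j z)
      = update (update W i z) j (c' • (W i + ω • W j)) from by rw [← hz]]
    rw [ψ.map_update_smul, ψ.map_update_add, ψ.map_update_smul, smul_eq_mul, smul_eq_mul]
  have e1 : ψ (update (update W i z) j (W j)) = ψ (update W i z) := by
    have ht : update (update W i z) j (W j) = update W i z :=
      Function.update_eq_self_iff.mpr hWj'.symm
    rw [ht]
  have e2 : ψ (update W i z) = c' * (ψ W + ω * ψ (update W i (W j))) := by
    conv_lhs => rw [hz]
    rw [ψ.map_update_smul, ψ.map_update_add, ψ.map_update_smul, smul_eq_mul, smul_eq_mul,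
      update_eq_self]
  have e3 : ψ (update (update W i z) j (W i))
      = c' * (ψ (update W j (W i)) + ω * ψ W) := by
    rw [update_comm hij]
    conv_lhs => rw [hz]
    rw [ψ.map_update_smul, ψ.map_update_add, ψ.map_update_smul, smul_eq_mul, smul_eq_mul]
    have e4 : ψ (update (update W j (W i)) i (W i)) = ψ (update W j (W i)) := by
      have ht : update (update W j (W i)) i (W i) = update W j (W i) :=
        Function.update_eq_self_iff.mpr (update_of_ne hij _ _).symm
      rw [ht]
    have e5 : ψ (update (update W j (W i)) i (W j)) = ψ W := by
      rw [← update_comm hij, swap_eq' ψ hsymm hij, update_eq_self, update_eq_self]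
    rw [e4, e5]
  rw [e0, e1, e2, e3]
  ring

theorem new_max (ψ : MultilinearMap ℂ (fun _ : Fin N => EuclideanSpace ℂ (Fin k)) ℂ)
    (hsymm : ∀ (σ : Equiv.Perm (Fin N)) (v : Fin N → EuclideanSpace ℂ (Fin k)),
      ψ (v ∘ σ) = ψ v)
    (M : ℝ) (hM : 0 < M)
    (hbound : ∀ u : Fin N → EuclideanSpace ℂ (Fin k), (∀ i, ‖u i‖ = 1) →
      ‖ψ u‖ ≤ M)
    (u : Fin N → EuclideanSpace ℂ (Fin k)) (hu : ∀ i, ‖u i‖ = 1)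
    (huM : ‖ψ u‖ = M)
    {i j : Fin N} (hij : i ≠ j) (ω : ℂ) (hω : ‖ω‖ = 1)
    (d : ℝ) (hd : d = 2 + 2 * (ω * ⟪u i, u j⟫_ℂ).re) (hd0 : 0 < d)
    (z : EuclideanSpace ℂ (Fin k))
    (hz : z = (((Real.sqrt d : ℝ)):ℂ)⁻¹ • (u i + ω • u j)) :
    ‖z‖ = 1 ∧ ψ (update (update u i z) j z) = ω * ψ u := by
  have hs : ‖u i + ω • u j‖^2 = d := by
    rw [@norm_add_sq ℂ _ _ _ _ (u i) _, inner_smul_right, norm_smul, hu i, hu j, hd]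
    simp [hω]
    ring
  have hsqrt : ‖u i + ω • u j‖ = Real.sqrt d := by
    rw [← hs, Real.sqrt_sq (norm_nonneg _)]
  have hdpos : (0:ℝ) < Real.sqrt d := Real.sqrt_pos.mpr hd0
  have hznorm : ‖z‖ = 1 := by
    rw [hz, norm_smul, hsqrt]
    simp only [norm_inv, Complex.norm_real, Real.norm_eq_abs, abs_of_pos hdpos]
    field_simp
  refine ⟨hznorm, ?_⟩
  rw [expand_zz ψ hsymm hij u z _ ω hz,
    first_order ψ M hM hbound u hu huM j (u i),
    first_order ψ M hM hbound u hu huM i (u j)]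
  have hconj : ⟪u j, u i⟫_ℂ = (starRingEnd ℂ) ⟪u i, u j⟫_ℂ :=
    (inner_conj_symm (u j) (u i)).symm
  have hid := omega_identity ω ⟪u i, u j⟫_ℂ hω d hd
  have hsq : ((Real.sqrt d : ℝ):ℂ)^2 = ((d:ℝ):ℂ) := by
    norm_cast
    exact Real.sq_sqrt hd0.le
  have hc2 : ((((Real.sqrt d : ℝ)):ℂ)⁻¹)^2 = ((d:ℝ):ℂ)⁻¹ := by
    rw [inv_pow, hsq]
  have hdc : ((d:ℝ):ℂ) ≠ 0 := by exact_mod_cast hd0.ne'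
  rw [hc2, hconj]
  have T : ψ u * (starRingEnd ℂ) ⟪u i, u j⟫_ℂ + 2*ω*(ψ u) + ω^2 * (ψ u * ⟪u i, u j⟫_ℂ)
      = (d:ℂ) * (ω * ψ u) := by linear_combination (ψ u) * hid
  rw [T, ← mul_assoc, inv_mul_cancel₀ hdc, one_mul]

theorem omega_eq (ψ : MultilinearMap ℂ (fun _ : Fin N => EuclideanSpace ℂ (Fin k)) ℂ)
    (hsymm : ∀ (σ : Equiv.Perm (Fin N)) (v : Fin N → EuclideanSpace ℂ (Fin k)),
      ψ (v ∘ σ) = ψ v)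
    (M : ℝ) (hM : 0 < M)
    (hbound : ∀ u : Fin N → EuclideanSpace ℂ (Fin k), (∀ i, ‖u i‖ = 1) →
      ‖ψ u‖ ≤ M)
    (u : Fin N → EuclideanSpace ℂ (Fin k)) (hu : ∀ i, ‖u i‖ = 1)
    (huM : ‖ψ u‖ = M)
    {i j l : Fin N} (hij : i ≠ j) (hli : l ≠ i) (hlj : l ≠ j)
    (ω : ℂ) (hω : ‖ω‖ = 1)
    (d : ℝ) (hd : d = 2 + 2 * (ω * ⟪u i, u j⟫_ℂ).re) (hd0 : 0 < d)
    (w : EuclideanSpace ℂ (Fin k)) :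
    ψ (update (update u j (u i)) l w) + ω^2 * ψ (update (update u i (u j)) l w)
      = ψ u * ⟪u l, w⟫_ℂ * (ω^2 * ⟪u i, u j⟫_ℂ + (starRingEnd ℂ) ⟪u i, u j⟫_ℂ) := by
  set z := (((Real.sqrt d : ℝ)):ℂ)⁻¹ • (u i + ω • u j) with hzdef
  obtain ⟨hz1, hz2⟩ := new_max ψ hsymm M hM hbound u hu huM hij ω hω d hd hd0 z hzdef
  set u' := update (update u i z) j z with hu'def
  have hu'n : ∀ m, ‖u' m‖ = 1 := by
    intro m
    rcases eq_or_ne m j with rfl | hmj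
    · rw [hu'def, update_self]; exact hz1
    rcases eq_or_ne m i with rfl | hmi
    · rw [hu'def, update_of_ne hij, update_self]; exact hz1
    · rw [hu'def, update_of_ne hmj, update_of_ne hmi]; exact hu m
  have hu'M : ‖ψ u'‖ = M := by
    rw [hz2, norm_mul, hω, one_mul]; exact huM
  have hfo := first_order ψ M hM hbound u' hu'n hu'M l w
  have hul : u' l = u l := by rw [hu'def, update_of_ne hlj, update_of_ne hli]
  set W := update u l w with hWdef
  have hWi : W i = u i := update_of_ne (Ne.symm hli) _ _
  have hWj : W j = u j := update_of_ne (Ne.symm hlj) _ _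
  have hzW : z = (((Real.sqrt d : ℝ)):ℂ)⁻¹ • (W i + ω • W j) := by
    rw [hWi, hWj, hzdef]
  have hkey : update u' l w = update (update W i z) j z := by
    rw [hu'def, hWdef, update_comm (Ne.symm hlj), update_comm (Ne.symm hli)]
  have hexp := expand_zz ψ hsymm hij W z _ ω hzW
  rw [hkey, hexp] at hfo
  rw [hul, hz2] at hfo
  have hWψ : ψ W = ψ u * ⟪u l, w⟫_ℂ := first_order ψ M hM hbound u hu huM l w
  have hTa : update W j (W i) = update (update u j (u i)) l w := by
    rw [hWi, hWdef]
    exact (update_comm (Ne.symm hlj) _ _ _).symm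
  have hTb : update W i (W j) = update (update u i (u j)) l w := by
    rw [hWj, hWdef]
    exact (update_comm (Ne.symm hli) _ _ _).symm
  rw [hTa, hTb, hWψ] at hfo
  have hsq : ((Real.sqrt d : ℝ):ℂ)^2 = ((d:ℝ):ℂ) := by
    norm_cast; exact Real.sq_sqrt hd0.le
  have hc2 : ((((Real.sqrt d : ℝ)):ℂ)⁻¹)^2 = ((d:ℝ):ℂ)⁻¹ := by rw [inv_pow, hsq]
  have hdc : ((d:ℝ):ℂ) ≠ 0 := by exact_mod_cast hd0.ne'
  rw [hc2, inv_mul_eq_iff_eq_mul₀ hdc] at hfo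
  have hid := omega_identity ω ⟪u i, u j⟫_ℂ hω d hd
  linear_combination hfo - (ψ u * ⟪u l, w⟫_ℂ) * hid

theorem diag (ψ : MultilinearMap ℂ (fun _ : Fin N => EuclideanSpace ℂ (Fin k)) ℂ)
    (hsymm : ∀ (σ : Equiv.Perm (Fin N)) (v : Fin N → EuclideanSpace ℂ (Fin k)),
      ψ (v ∘ σ) = ψ v)
    (M : ℝ) (hM : 0 < M)
    (hbound : ∀ u : Fin N → EuclideanSpace ℂ (Fin k), (∀ i, ‖u i‖ = 1) →
      ‖ψ u‖ ≤ M)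
    (u : Fin N → EuclideanSpace ℂ (Fin k)) (hu : ∀ i, ‖u i‖ = 1)
    (huM : ‖ψ u‖ = M)
    {i j l : Fin N} (hij : i ≠ j) (hli : l ≠ i) (hlj : l ≠ j)
    (w : EuclideanSpace ℂ (Fin k)) :
    ψ (update (update u j (u i)) l w)
      = ψ u * (starRingEnd ℂ) ⟪u i, u j⟫_ℂ * ⟪u l, w⟫_ℂ := by
  have E1 : ψ (update (update u j (u i)) l w) + ψ (update (update u i (u j)) l w)
      = ψ u * ⟪u l, w⟫_ℂ * (⟪u i, u j⟫_ℂ + (starRingEnd ℂ) ⟪u i, u j⟫_ℂ) := by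
    rcases le_or_gt 0 (⟪u i, u j⟫_ℂ).re with h | h
    · have := omega_eq ψ hsymm M hM hbound u hu huM hij hli hlj 1 (by simp)
        (2 + 2 * (⟪u i, u j⟫_ℂ).re) (by simp [Complex.mul_re]; try ring) (by linarith) w
      simpa using this
    · have := omega_eq ψ hsymm M hM hbound u hu huM hij hli hlj (-1) (by simp)
        (2 - 2 * (⟪u i, u j⟫_ℂ).re) (by simp [Complex.mul_re]; try ring) (by linarith) w
      simpa using this
  have E2 : ψ (update (update u j (u i)) l w) - ψ (update (update u i (u j)) l w)
      = ψ u * ⟪u l, w⟫_ℂ * (-⟪u i, u j⟫_ℂ + (starRingEnd ℂ) ⟪u i, u j⟫_ℂ) := by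
    rcases le_or_gt (⟪u i, u j⟫_ℂ).im 0 with h | h
    · have := omega_eq ψ hsymm M hM hbound u hu huM hij hli hlj Complex.I (by simp)
        (2 - 2 * (⟪u i, u j⟫_ℂ).im) (by simp [Complex.mul_re]; try ring) (by linarith) w
      rw [Complex.I_sq] at this
      linear_combination this
    · have := omega_eq ψ hsymm M hM hbound u hu huM hij hli hlj (-Complex.I) (by simp)
        (2 + 2 * (⟪u i, u j⟫_ℂ).im) (by simp [Complex.mul_re]; try ring) (by linarith) w
      have hsq : (-Complex.I)^2 = -1 := by
        rw [neg_pow, Complex.I_sq]; norm_num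
      rw [hsq] at this
      linear_combination this
  linear_combination (E1 + E2) / 2

theorem collinear_rel (ψ : MultilinearMap ℂ (fun _ : Fin N => EuclideanSpace ℂ (Fin k)) ℂ)
    (hsymm : ∀ (σ : Equiv.Perm (Fin N)) (v : Fin N → EuclideanSpace ℂ (Fin k)),
      ψ (v ∘ σ) = ψ v)
    (M : ℝ) (hM : 0 < M)
    (hbound : ∀ u : Fin N → EuclideanSpace ℂ (Fin k), (∀ i, ‖u i‖ = 1) →
      ‖ψ u‖ ≤ M)
    (u : Fin N → EuclideanSpace ℂ (Fin k)) (hu : ∀ i, ‖u i‖ = 1)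
    (huM : ‖ψ u‖ = M)
    {i j l : Fin N} (hij : i ≠ j) (hli : l ≠ i) (hlj : l ≠ j) :
    ⟪u i, u j⟫_ℂ • u l = ⟪u i, u l⟫_ℂ • u j := by
  have hv : ψ u ≠ 0 := by
    intro h0
    rw [h0] at huM
    simp at huM
    exact hM.ne' huM.symm
  have h1 := diag ψ hsymm M hM hbound u hu huM hij hli hlj
  have h2 := diag ψ hsymm M hM hbound u hu huM (Ne.symm hli) (Ne.symm hij) (Ne.symm hlj)
  have hlink : ∀ w, ψ (update (update u j (u i)) l w) = ψ (update (update u l (u i)) j w) := by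
    intro w
    rw [swap_eq' ψ hsymm (Ne.symm hlj) u (u i) w, update_comm (Ne.symm hlj)]
  have hw : ∀ w : EuclideanSpace ℂ (Fin k),
      (starRingEnd ℂ) ⟪u i, u j⟫_ℂ * ⟪u l, w⟫_ℂ
        = (starRingEnd ℂ) ⟪u i, u l⟫_ℂ * ⟪u j, w⟫_ℂ := by
    intro w
    have h3 := (h1 w).symm.trans ((hlink w).trans (h2 w))
    rw [mul_assoc, mul_assoc] at h3
    exact mul_left_cancel₀ hv h3
  have hxx : ⟪⟪u i, u j⟫_ℂ • u l - ⟪u i, u l⟫_ℂ • u j,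
      ⟪u i, u j⟫_ℂ • u l - ⟪u i, u l⟫_ℂ • u j⟫_ℂ = 0 := by
    rw [inner_sub_left, inner_smul_left, inner_smul_left, hw]
    ring
  exact sub_eq_zero.mp (inner_self_eq_zero.mp hxx)

end Stmt5Aux

open Function Stmt5Aux in
open scoped InnerProductSpace in
/-- For N ≥ 3, a nonzero symmetric N-linear form on ℂ^k maximized at unit
vectors α₁,…,α_N forces all αᵢ to be equal up to phases. -/
theorem stmt_5 (N k : ℕ) (hN : 3 ≤ N)
    (ψ : MultilinearMap ℂ (fun _ : Fin N => EuclideanSpace ℂ (Fin k)) ℂ)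
    (hψ : ψ ≠ 0)
    (hsymm : ∀ (σ : Equiv.Perm (Fin N)) (v : Fin N → EuclideanSpace ℂ (Fin k)),
      ψ (v ∘ σ) = ψ v)
    (α : Fin N → EuclideanSpace ℂ (Fin k))
    (hα : ∀ i, ‖α i‖ = 1)
    (hmax : ∀ u : Fin N → EuclideanSpace ℂ (Fin k),
      (∀ i, ‖u i‖ = 1) → ‖ψ u‖ ≤ ‖ψ α‖) :
    ∀ i j : Fin N, ∃ c : ℂ, ‖c‖ = 1 ∧ α i = c • α j := by
  intro i j
  classical
  set M := ‖ψ α‖ with hMdef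
  have hex : ∃ v, ψ v ≠ 0 := by
    by_contra h
    push_neg at h
    exact hψ (MultilinearMap.ext fun v => by simp [h v])
  obtain ⟨v0, hv0⟩ := hex
  have hvi : ∀ i, v0 i ≠ 0 := fun i h => hv0 (ψ.map_coord_zero i h)
  have hM : 0 < M := by
    have hnorm : ∀ i, ‖(fun i => ((‖v0 i‖:ℂ))⁻¹ • v0 i) i‖ = 1 := by
      intro i
      have h0 : ‖v0 i‖ ≠ 0 := norm_ne_zero_iff.mpr (hvi i)
      simp [norm_smul, h0]
    have hne : ψ (fun i => ((‖v0 i‖:ℂ))⁻¹ • v0 i) ≠ 0 := by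
      rw [ψ.map_smul_univ]
      refine smul_ne_zero (Finset.prod_ne_zero_iff.mpr fun i _ => ?_) hv0
      simpa using norm_ne_zero_iff.mpr (hvi i)
    exact lt_of_lt_of_le (norm_pos_iff.mpr hne) (hmax _ hnorm)
  have hbound := hmax
  have hthird : ∀ p q : Fin N, ∃ l, l ≠ p ∧ l ≠ q := by
    intro p q
    by_contra h
    push_neg at h
    have hsub : (Finset.univ : Finset (Fin N)) ⊆ {p, q} := by
      intro l _
      simp only [Finset.mem_insert, Finset.mem_singleton]
      rcases eq_or_ne l p with rfl | h'
      · exact Or.inl rfl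
      · exact Or.inr (h l h')
    have h1 := Finset.card_le_card hsub
    have h2 : ({p, q} : Finset (Fin N)).card ≤ 2 :=
      le_trans (Finset.card_insert_le _ _) (by simp)
    rw [Finset.card_univ, Fintype.card_fin] at h1
    omega
  rcases eq_or_ne i j with rfl | hij
  · exact ⟨1, by simp, by simp⟩
  by_cases hC : ∀ p q : Fin N, p ≠ q → ⟪α p, α q⟫_ℂ = 0
  · exfalso
    obtain ⟨l, hli, hlj⟩ := hthird i j
    have hd : (2:ℝ) = 2 + 2*((1:ℂ) * ⟪α i, α j⟫_ℂ).re := by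
      rw [hC i j hij]; simp
    set z := (((Real.sqrt 2 : ℝ)):ℂ)⁻¹ • (α i + (1:ℂ) • α j) with hzdef
    obtain ⟨hz1, hz2⟩ := new_max ψ hsymm M hM hbound α hα rfl hij 1 (by simp) 2 hd
      (by norm_num) z hzdef
    set u' := update (update α i z) j z with hu'def
    have hu'n : ∀ m, ‖u' m‖ = 1 := by
      intro m
      rcases eq_or_ne m j with rfl | hmj
      · rw [hu'def, update_self]; exact hz1
      rcases eq_or_ne m i with rfl | hmi
      · rw [hu'def, update_of_ne hij, update_self]; exact hz1
      · rw [hu'def, update_of_ne hmj, update_of_ne hmi]; exact hα m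
    have hu'M : ‖ψ u'‖ = M := by rw [hz2, one_mul]
    have hrel := collinear_rel ψ hsymm M hM hbound u' hu'n hu'M hij hli hlj
    have hui : u' i = z := by rw [hu'def, update_of_ne hij, update_self]
    have huj : u' j = z := by rw [hu'def, update_self]
    have hul : u' l = α l := by rw [hu'def, update_of_ne hlj, update_of_ne hli]
    rw [hui, huj, hul] at hrel
    have hzz : ⟪z, z⟫_ℂ = 1 := by
      rw [inner_self_eq_norm_sq_to_K, hz1]; norm_num
    have hzl : ⟪z, α l⟫_ℂ = 0 := by
      rw [hzdef, inner_smul_left, inner_add_left, inner_smul_left,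
        hC i l (Ne.symm hli), hC j l (Ne.symm hlj)]
      simp
    rw [hzz, hzl, one_smul, zero_smul] at hrel
    have := hα l
    rw [hrel] at this
    simp at this
  · push_neg at hC
    obtain ⟨p, q, hpq, hspq⟩ := hC
    have hrelα : ∀ a b c : Fin N, a ≠ b → c ≠ a → c ≠ b →
        ⟪α a, α b⟫_ℂ • α c = ⟪α a, α c⟫_ℂ • α b :=
      fun a b c h1 h2 h3 => collinear_rel ψ hsymm M hM hbound α hα rfl h1 h2 h3
    have hcancel : ∀ (x y : EuclideanSpace ℂ (Fin k)) (c e : ℂ), c ≠ 0 →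
        c • x = e • y → x = (c⁻¹ * e) • y := by
      intro x y c e hc h
      rw [mul_smul, ← h, smul_smul, inv_mul_cancel₀ hc, one_smul]
    have claim : ∀ r : Fin N, ∃ c : ℂ, α r = c • α q := by
      intro r
      rcases eq_or_ne r q with rfl | hrq
      · exact ⟨1, (one_smul _ _).symm⟩
      rcases eq_or_ne r p with rfl | hrp
      · obtain ⟨l, hlr, hlq⟩ := hthird r q
        have h1 := hrelα r q l hrq hlr hlq
        have h2 := hrelα q r l (Ne.symm hrq) hlq hlr
        have hsqr : ⟪α q, α r⟫_ℂ ≠ 0 := by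
          rw [← inner_conj_symm (α q) (α r)]
          intro h0
          exact hspq (by rw [← Complex.conj_conj (⟪α r, α q⟫_ℂ), h0, map_zero])
        have hαl : α l ≠ 0 := by
          intro h0
          have := hα l
          rw [h0] at this
          simp at this
        have hsql : ⟪α q, α l⟫_ℂ ≠ 0 := by
          intro h0
          rw [h0, zero_smul] at h2
          rcases smul_eq_zero.mp h2 with h | h
          · exact hsqr h
          · exact hαl h
        have hl1 : α l = ((⟪α r, α q⟫_ℂ)⁻¹ * ⟪α r, α l⟫_ℂ) • α q :=
          hcancel _ _ _ _ hspq h1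
        have hr2 : α r = ((⟪α q, α l⟫_ℂ)⁻¹ * ⟪α q, α r⟫_ℂ) • α l :=
          hcancel _ _ _ _ hsql h2.symm
        exact ⟨_, by rw [hr2, hl1, smul_smul]⟩
      · have h1 := hrelα p q r hpq hrp hrq
        exact ⟨_, hcancel _ _ _ _ hspq h1⟩
    obtain ⟨ci, hci⟩ := claim i
    obtain ⟨cj, hcj⟩ := claim j
    have hq1 : ‖α q‖ = 1 := hα q
    have habs : ∀ r (c : ℂ), α r = c • α q → ‖c‖ = 1 := by
      intro r c h
      have := hα r
      rw [h, norm_smul, hq1, mul_one] at this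
      simpa using this
    have hci1 := habs i ci hci
    have hcj1 := habs j cj hcj
    have hcj0 : cj ≠ 0 := by
      intro h0
      rw [h0] at hcj1
      simp at hcj1
    refine ⟨ci / cj, ?_, ?_⟩
    · rw [norm_div, hci1, hcj1, div_one]
    · rw [hci, hcj, smul_smul, div_mul_cancel₀ _ hcj0]
end

section
/- For every symmetric N-linear form ψ on ℂ^k, the maximum of |ψ(u₁,…,u_N)| over N-tuples of unit vectors equals the maximum of |ψ(α,…,α)| over single unit vectors α; that is, the polarization constant of finite-dimensional complex Hilbert space is 1 for symmetric multilinear forms. -/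
open Function

section aux
variable {N k : ℕ}

local notation "E" => EuclideanSpace ℂ (Fin k)

theorem aux_sum_update2 {G : Type*} [AddCommGroup G] (u : Fin N → G) (i j : Fin N) (hij : i ≠ j)
    (p q : G) :
    ∑ l, update (update u i p) j q l = (∑ l, u l) - u i - u j + p + q := by
  rw [Finset.sum_update_of_mem (Finset.mem_univ j), Finset.sum_update_of_mem]
  · have h1 : (Finset.univ \ {j}) \ {i} = Finset.univ \ ({j} ∪ {i}) := by ext l; simp
    rw [h1, Finset.sum_sdiff_eq_sub (Finset.subset_univ _), Finset.sum_union
        (by simp [Ne.symm hij]), Finset.sum_singleton, Finset.sum_singleton]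
    abel
  · simp [hij]

theorem aux_swap_update {G : Type*} (u : Fin N → G) (i j : Fin N) (hij : i ≠ j) :
    u ∘ Equiv.swap i j = update (update u i (u j)) j (u i) := by
  funext l
  rcases eq_or_ne l j with rfl | hlj
  · simp [Equiv.swap_apply_right]
  rcases eq_or_ne l i with rfl | hli
  · simp [Equiv.swap_apply_left, update_of_ne hij, update_self]
  · simp [Equiv.swap_apply_of_ne_of_ne hli hlj, update_of_ne hlj, update_of_ne hli]

theorem aux_continuous (ψ : MultilinearMap ℂ (fun _ : Fin N => E) ℂ) :
    Continuous ψ := by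
  have hrep : ⇑ψ = fun u : Fin N → E =>
      ∑ r : Fin N → Fin k, (∏ i, u i (r i)) • ψ (fun i => EuclideanSpace.single (r i) (1:ℂ)) := by
    funext u
    have h1 : ∀ (z : E), z = ∑ j, z j • EuclideanSpace.single j (1:ℂ) := by
      intro z
      have := (EuclideanSpace.basisFun (Fin k) ℂ).sum_repr z
      simp only [EuclideanSpace.basisFun_apply, EuclideanSpace.basisFun_repr] at this
      exact this.symm
    calc ψ u = ψ (fun i => ∑ j, (u i j) • EuclideanSpace.single j (1:ℂ)) := by
          congr 1; funext i; exact h1 (u i)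
    _ = ∑ r : Fin N → Fin k, ψ (fun i => (u i (r i)) • EuclideanSpace.single (r i) (1:ℂ)) := by
        rw [ψ.map_sum]
    _ = _ := by
        refine Finset.sum_congr rfl fun r _ => ?_
        rw [ψ.map_smul_univ]
  rw [hrep]
  refine continuous_finset_sum _ fun r _ => Continuous.smul (f := fun u : Fin N → E => ∏ i, u i (r i)) ?_ continuous_const
  exact continuous_finset_prod _ fun i _ =>
    by fun_prop

set_option maxHeartbeats 1000000 in
theorem aux_merge (ψ : MultilinearMap ℂ (fun _ : Fin N => E) ℂ)
    (hsymm : ∀ (σ : Equiv.Perm (Fin N)) (v : Fin N → E), ψ (v ∘ σ) = ψ v)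
    (u : Fin N → E) (hu : ∀ l, ‖u l‖ = 1)
    (hmax : ∀ w : Fin N → E, (∀ l, ‖w l‖ = 1) → ‖ψ w‖ ≤ ‖ψ u‖)
    (i j : Fin N) (hij : i ≠ j) (hne : u i ≠ u j) :
    ∃ v : Fin N → E, (∀ l, ‖v l‖ = 1) ∧ ‖ψ v‖ = ‖ψ u‖ ∧
      ‖∑ l, u l‖ < ‖∑ l, v l‖ := by
  classical
  set M := ‖ψ u‖ with hM
  set x := u i with hx
  set y := u j with hy0
  set S := ∑ l, u l with hS
  set B : E → E → ℂ := fun p q => ψ (update (update u i p) j q) with hB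
  have hMnn : 0 ≤ M := norm_nonneg _
  -- basic facts about B
  have hBcomm : ∀ p q, B p q = ψ (update (update u j q) i p) := by
    intro p q; rw [hB]; simp only; rw [update_comm hij]
  have hBaddR : ∀ p q q' : E, B p (q + q') = B p q + B p q' := by
    intro p q q'; exact ψ.map_update_add _ j q q'
  have hBsubR : ∀ p q q' : E, B p (q - q') = B p q - B p q' := by
    intro p q q'; exact ψ.map_update_sub _ j q q'
  have hBaddL : ∀ p p' q : E, B (p + p') q = B p q + B p' q := by
    intro p p' q; rw [hBcomm, hBcomm p, hBcomm p']; exact ψ.map_update_add _ i p p'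
  have hBsubL : ∀ p p' q : E, B (p - p') q = B p q - B p' q := by
    intro p p' q; rw [hBcomm, hBcomm p, hBcomm p']; exact ψ.map_update_sub _ i p p'
  have hBsmul : ∀ (c : ℂ) (p q : E), B (c • p) (c • q) = c ^ 2 * B p q := by
    intro c p q
    have h1 : B (c • p) (c • q) = c • B (c • p) q := ψ.map_update_smul _ j c q
    have h2 : B (c • p) q = c • B p q := by
      rw [hBcomm, hBcomm p]; exact ψ.map_update_smul _ i c p
    rw [h1, h2, smul_eq_mul, smul_eq_mul]; ring
  have hBxy : B x y = ψ u := by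
    rw [hB]; simp only
    rw [hx, hy0, update_eq_self, update_eq_self]
  have hByx : B y x = ψ u := by
    rw [hB]; simp only [hx, hy0]
    rw [← aux_swap_update u i j hij]
    exact hsymm _ u
  have htup : ∀ p q : E, ‖p‖ = 1 → ‖q‖ = 1 → ∀ l, ‖update (update u i p) j q l‖ = 1 := by
    intro p q hp hq l
    rcases eq_or_ne l j with rfl | hlj
    · rw [update_self]; exact hq
    rcases eq_or_ne l i with rfl | hli
    · rw [update_of_ne hlj, update_self]; exact hp
    · rw [update_of_ne hlj, update_of_ne hli]; exact hu l
  have hBunit : ∀ p q : E, ‖p‖ = 1 → ‖q‖ = 1 → ‖B p q‖ ≤ M := by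
    intro p q hp hq; exact hmax _ (htup p q hp hq)
  set s := ‖x + y‖ with hs
  set t := ‖x - y‖ with ht
  have hx1 : ‖x‖ = 1 := hu i
  have hy1 : ‖y‖ = 1 := hu j
  have hpar : s ^ 2 + t ^ 2 = 4 := by
    have h := parallelogram_law_with_norm ℂ x y
    rw [hx1, hy1] at h
    rw [hs, ht]; ring_nf; ring_nf at h; linarith
  have htpos : 0 < t := by
    rw [ht, norm_pos_iff]
    exact sub_ne_zero.mpr hne
  have hD : B (x + y) (x + y) - B (x - y) (x - y) = 4 * ψ u := by
    rw [hBaddL, hBaddR, hBaddR, hBsubL, hBsubR, hBsubR, hBxy, hByx]; ring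
  have h4M : 4 * M ≤ ‖B (x + y) (x + y)‖ + ‖B (x - y) (x - y)‖ := by
    have h1 : (4 : ℝ) * M = ‖4 * ψ u‖ := by
      rw [norm_mul]; norm_num [hM]
    rw [h1, ← hD]
    exact norm_sub_le _ _
  have hdiag : ∀ z : E, ‖B z z‖ ≤ M * ‖z‖ ^ 2 := by
    intro z
    rcases eq_or_ne z 0 with rfl | hz
    · have : B 0 0 = 0 := ψ.map_update_zero _ j
      simp [this]
    · set w : E := ((‖z‖ : ℂ))⁻¹ • z with hw
      have hw1 : ‖w‖ = 1 := norm_smul_inv_norm hz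
      have hzw : z = ((‖z‖ : ℂ)) • w := by
        rw [hw, smul_smul, mul_inv_cancel₀ (by exact_mod_cast norm_ne_zero_iff.mpr hz), one_smul]
      have hBzz : B z z = ((‖z‖ : ℂ)) ^ 2 * B w w := by
        conv_lhs => rw [hzw]
        exact hBsmul _ _ _
      calc ‖B z z‖ = ‖((‖z‖ : ℂ)) ^ 2 * B w w‖ := by
            rw [hBzz]
      _ = ‖z‖ ^ 2 * ‖B w w‖ := by
            rw [norm_mul, norm_pow, Complex.norm_real, norm_norm]
      _ ≤ ‖z‖ ^ 2 * M := by
            exact mul_le_mul_of_nonneg_left (hBunit w w hw1 hw1) (sq_nonneg _)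
      _ = M * ‖z‖ ^ 2 := mul_comm _ _
  -- the two candidate new coordinates
  rcases eq_or_ne s 0 with hs0 | hs0
  · -- x + y = 0, use w = ε • x
    have hxy0 : x + y = 0 := by
      rw [← norm_eq_zero, ← hs]; exact hs0
    have hyx : y = -x := eq_neg_of_add_eq_zero_right hxy0
    have hxy2 : x - y = (2:ℂ) • x := by rw [hyx, sub_neg_eq_add, two_smul]
    have hD2 : B (x - y) (x - y) = 4 * B x x := by
      rw [hxy2, hBsmul]; norm_num
    have hD1 : B (x + y) (x + y) = 0 := by
      rw [hxy0]; exact ψ.map_update_zero _ j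
    have hBxx : ‖B x x‖ = M := by
      have hle : ‖B x x‖ ≤ M := hBunit x x hx1 hx1
      have hge : 4 * M ≤ 4 * ‖B x x‖ := by
        have h2 := h4M
        rw [hD1, hD2] at h2
        simpa [norm_mul] using h2
      linarith
    set r := RCLike.re ((inner ℂ S x : ℂ)) with hrdef
    set ε : ℝ := if 0 ≤ r then 1 else -1 with hεdef
    have hε1 : ε = 1 ∨ ε = -1 := by
      rw [hεdef]; split <;> simp
    have hεabs : ‖(ε:ℂ)‖ = 1 := by rcases hε1 with h | h <;> simp [h]
    have hεr : 0 ≤ ε * r := by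
      rw [hεdef]; split
      · rename_i h; simpa using h
      · rename_i h; have := lt_of_not_ge h; nlinarith
    set w : E := (ε:ℂ) • x with hwdef
    have hw1 : ‖w‖ = 1 := by rw [hwdef, norm_smul, hεabs, hx1, one_mul]
    refine ⟨update (update u i w) j w, htup w w hw1 hw1, ?_, ?_⟩
    · have hBww : ψ (update (update u i w) j w) = (ε:ℂ) ^ 2 * B x x := hBsmul (ε:ℂ) x x
      rw [hBww, norm_mul, norm_pow, Complex.norm_real, Real.norm_eq_abs]
      have : |ε| = 1 := by rcases hε1 with h | h <;> simp [h]
      rw [this, one_pow, one_mul, hBxx, hM]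
    · have hsum : ∑ l, update (update u i w) j w l = S + ((2 * ε : ℝ) : ℂ) • x := by
        rw [aux_sum_update2 u i j hij w w, ← hx, ← hy0, ← hS, hyx, hwdef]
        push_cast
        module
      have hnorm2 : ‖((2 * ε : ℝ) : ℂ) • x‖ = 2 := by
        rw [norm_smul, Complex.norm_real, hx1, mul_one]
        rcases hε1 with h | h <;> rw [h] <;> norm_num
      have hre : RCLike.re ((inner ℂ S (((2 * ε : ℝ) : ℂ) • x) : ℂ)) = 2 * ε * r := by
        rw [inner_smul_right, RCLike.re_to_complex, Complex.re_ofReal_mul, hrdef,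
          RCLike.re_to_complex]
      have hnormsq : ‖S + ((2 * ε : ℝ) : ℂ) • x‖ ^ 2 = ‖S‖ ^ 2 + 4 * (ε * r) + 4 := by
        rw [norm_add_sq (𝕜 := ℂ), hre, hnorm2]
        ring
      rw [hsum]
      have hlt : ‖S‖ ^ 2 < ‖S + ((2 * ε : ℝ) : ℂ) • x‖ ^ 2 := by
        rw [hnormsq]; linarith [hεr]
      exact lt_of_pow_lt_pow_left₀ 2 (norm_nonneg _) hlt
  · -- s ≠ 0, use w = ε • p, p = normalize (x+y)
    have hspos : 0 < s := lt_of_le_of_ne (norm_nonneg _) (Ne.symm hs0)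
    have hxyne : x + y ≠ 0 := by
      rw [← norm_ne_zero_iff, ← hs]; exact hs0
    set p : E := ((s : ℂ))⁻¹ • (x + y) with hpdef
    have hp1 : ‖p‖ = 1 := by
      rw [hpdef, hs]; exact norm_smul_inv_norm hxyne
    have hxyp : x + y = ((s : ℂ)) • p := by
      rw [hpdef, smul_smul, mul_inv_cancel₀ (by exact_mod_cast hs0), one_smul]
    have hD1 : B (x + y) (x + y) = ((s : ℂ)) ^ 2 * B p p := by
      rw [hxyp, hBsmul]
    have hBpp : ‖B p p‖ = M := by
      have hle : ‖B p p‖ ≤ M := hBunit p p hp1 hp1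
      have habs1 : ‖B (x + y) (x + y)‖ = s ^ 2 * ‖B p p‖ := by
        rw [hD1, norm_mul, norm_pow, Complex.norm_real, Real.norm_eq_abs, abs_of_pos hspos]
      have habs2 : ‖B (x - y) (x - y)‖ ≤ M * t ^ 2 := by
        have h5 := hdiag (x - y); rwa [← ht] at h5
      have hid : s ^ 2 * M = 4 * M - M * t ^ 2 := by linear_combination M * hpar
      have hs2 : s ^ 2 * M ≤ s ^ 2 * ‖B p p‖ := by
        rw [hid, ← habs1]; linarith [h4M]
      have h6 := le_of_mul_le_mul_left hs2 (by positivity : (0:ℝ) < s ^ 2)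
      linarith
    have hslt2 : s < 2 := by nlinarith [htpos]
    set r := RCLike.re ((inner ℂ S (x + y) : ℂ)) with hrdef
    set ε : ℝ := if 0 ≤ r then 1 else -1 with hεdef
    have hε1 : ε = 1 ∨ ε = -1 := by rw [hεdef]; split <;> simp
    have hεabs : ‖(ε:ℂ)‖ = 1 := by rcases hε1 with h | h <;> simp [h]
    set c : ℝ := 2 * ε / s - 1 with hcdef
    have hcr : 0 ≤ c * r := by
      rcases le_or_gt 0 r with h | h
      · have hε' : ε = 1 := by rw [hεdef, if_pos h]
        have hc0 : 0 ≤ c := by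
          rw [hcdef, hε', sub_nonneg, le_div_iff₀ hspos]; linarith
        exact mul_nonneg hc0 h
      · have hε' : ε = -1 := by rw [hεdef, if_neg (not_le.mpr h)]
        have hc0 : c ≤ 0 := by
          rw [hcdef, hε']
          have h2 : 2 * (-1:ℝ) / s < 0 := div_neg_of_neg_of_pos (by norm_num) hspos
          linarith
        nlinarith
    have hcne : c ≠ 0 := by
      intro hcz
      rw [hcdef, sub_eq_zero] at hcz
      have hcz' : 2 * ε = s := by field_simp at hcz; linarith
      rcases hε1 with h | h <;> rw [h] at hcz' <;> linarith
    set w : E := (ε:ℂ) • p with hwdef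
    have hw1 : ‖w‖ = 1 := by rw [hwdef, norm_smul, hεabs, hp1, one_mul]
    refine ⟨update (update u i w) j w, htup w w hw1 hw1, ?_, ?_⟩
    · have hBww : ψ (update (update u i w) j w) = (ε:ℂ) ^ 2 * B p p := hBsmul (ε:ℂ) p p
      rw [hBww, norm_mul, norm_pow, Complex.norm_real, Real.norm_eq_abs]
      have : |ε| = 1 := by rcases hε1 with h | h <;> simp [h]
      rw [this, one_pow, one_mul, hBpp, hM]
    · have hcs : (c : ℂ) * (s : ℂ) = 2 * (ε : ℂ) - (s : ℂ) := by
        have : c * s = 2 * ε - s := by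
          rw [hcdef]; field_simp
        exact_mod_cast congrArg (Complex.ofReal) this
      have hw2 : w = ((ε:ℂ) * ((s:ℂ))⁻¹) • (x + y) := by
        rw [hwdef, hpdef, smul_smul]
      have hcC : ((c : ℝ) : ℂ) = 2 * (ε:ℂ) * ((s:ℂ))⁻¹ - 1 := by
        rw [hcdef]; push_cast; ring
      have hsum : ∑ l, update (update u i w) j w l = S + ((c : ℝ) : ℂ) • (x + y) := by
        rw [aux_sum_update2 u i j hij w w, ← hx, ← hy0, ← hS, hw2, hcC]
        module
      have hnorm2 : ‖((c : ℝ) : ℂ) • (x + y)‖ = |c| * s := by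
        rw [norm_smul, Complex.norm_real, ← hs]
        rfl
      have hre : RCLike.re ((inner ℂ S (((c : ℝ) : ℂ) • (x + y)) : ℂ)) = c * r := by
        rw [inner_smul_right, RCLike.re_to_complex, Complex.re_ofReal_mul, hrdef,
          RCLike.re_to_complex]
      have hnormsq : ‖S + ((c : ℝ) : ℂ) • (x + y)‖ ^ 2 = ‖S‖ ^ 2 + 2 * (c * r) + c ^ 2 * s ^ 2 := by
        rw [norm_add_sq (𝕜 := ℂ), hre, hnorm2]
        rw [mul_pow, sq_abs]
      rw [hsum]
      have hlt : ‖S‖ ^ 2 < ‖S + ((c : ℝ) : ℂ) • (x + y)‖ ^ 2 := by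
        rw [hnormsq]
        have h7 : 0 < c ^ 2 * s ^ 2 := by positivity
        linarith [hcr]
      exact lt_of_pow_lt_pow_left₀ 2 (norm_nonneg _) hlt
end aux

/-- The polarization constant of ℂ^k is 1: for any symmetric N-linear form ψ the
maximum of |ψ(u₁,…,u_N)| over N-tuples of unit vectors equals the maximum of
|ψ(α,…,α)| over single unit vectors α. -/
theorem stmt_6 (N k : ℕ) (hk : 0 < k)
    (ψ : MultilinearMap ℂ (fun _ : Fin N => EuclideanSpace ℂ (Fin k)) ℂ)
    (hsymm : ∀ (σ : Equiv.Perm (Fin N)) (v : Fin N → EuclideanSpace ℂ (Fin k)),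
      ψ (v ∘ σ) = ψ v) :
    ∃ M : ℝ,
      IsGreatest {x : ℝ | ∃ u : Fin N → EuclideanSpace ℂ (Fin k),
        (∀ i, ‖u i‖ = 1) ∧ x = ‖ψ u‖} M ∧
      IsGreatest {x : ℝ | ∃ α : EuclideanSpace ℂ (Fin k),
        ‖α‖ = 1 ∧ x = ‖ψ (fun _ => α)‖} M := by
  classical
  set T : Set (Fin N → EuclideanSpace ℂ (Fin k)) := {u | ∀ l, ‖u l‖ = 1} with hT
  have hTeq : T = Set.pi Set.univ
      (fun _ : Fin N => Metric.sphere (0 : EuclideanSpace ℂ (Fin k)) 1) := by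
    ext u
    simp [hT, Set.mem_pi, mem_sphere_zero_iff_norm]
  have hTcomp : IsCompact T := by
    rw [hTeq]; exact isCompact_univ_pi (fun _ => isCompact_sphere _ _)
  set α₀ : EuclideanSpace ℂ (Fin k) := EuclideanSpace.single (⟨0, hk⟩ : Fin k) (1:ℂ) with hα₀
  have hα₀1 : ‖α₀‖ = 1 := by simp [hα₀, EuclideanSpace.norm_single]
  have hTne : T.Nonempty := ⟨fun _ => α₀, fun l => hα₀1⟩
  have hcont : Continuous fun u : Fin N → EuclideanSpace ℂ (Fin k) => ‖ψ u‖ :=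
    continuous_norm.comp (aux_continuous ψ)
  obtain ⟨u₀, hu₀T, hu₀max⟩ := hTcomp.exists_isMaxOn hTne hcont.continuousOn
  have hu₀max' : ∀ w : Fin N → EuclideanSpace ℂ (Fin k), (∀ l, ‖w l‖ = 1) →
      ‖ψ w‖ ≤ ‖ψ u₀‖ := fun w hw => (isMaxOn_iff.mp hu₀max) w hw
  set M := ‖ψ u₀‖ with hMdef
  set K : Set (Fin N → EuclideanSpace ℂ (Fin k)) :=
    T ∩ {u | ‖ψ u‖ = M} with hK
  have hKcomp : IsCompact K := by
    refine hTcomp.of_isClosed_subset ?_ Set.inter_subset_left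
    exact hTcomp.isClosed.inter (isClosed_eq hcont continuous_const)
  have hKne : K.Nonempty := ⟨u₀, hu₀T, rfl⟩
  have hgcont : Continuous fun u : Fin N → EuclideanSpace ℂ (Fin k) => ‖∑ l, u l‖ :=
    (continuous_finset_sum _ fun l _ => continuous_apply l).norm
  obtain ⟨u, hu_mem, humax⟩ := hKcomp.exists_isMaxOn hKne hgcont.continuousOn
  obtain ⟨huT, huM⟩ := hu_mem
  have huM : ‖ψ u‖ = M := huM
  have hall : ∀ i j, u i = u j := by
    intro i j
    by_contra hne
    have hij : i ≠ j := by rintro rfl; exact hne rfl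
    have hmax' : ∀ w : Fin N → EuclideanSpace ℂ (Fin k), (∀ l, ‖w l‖ = 1) →
        ‖ψ w‖ ≤ ‖ψ u‖ := by
      intro w hw; rw [huM]; exact hu₀max' w hw
    obtain ⟨v, hv1, hv2, hv3⟩ := aux_merge ψ hsymm u huT hmax' i j hij hne
    have hvK : v ∈ K := ⟨hv1, by rw [Set.mem_setOf_eq, hv2, huM]⟩
    exact absurd ((isMaxOn_iff.mp humax) v hvK) (not_le.mpr hv3)
  refine ⟨M, ⟨⟨u₀, hu₀T, rfl⟩, ?_⟩, ⟨?_, ?_⟩⟩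
  · rintro x ⟨w, hw, rfl⟩
    exact hu₀max' w hw
  · rcases Nat.eq_zero_or_pos N with hN | hN
    · refine ⟨α₀, hα₀1, ?_⟩
      have : (fun _ : Fin N => α₀) = u := by
        funext l; exact absurd l.2 (by omega)
      rw [this, huM]
    · refine ⟨u ⟨0, hN⟩, huT _, ?_⟩
      have : (fun _ : Fin N => u ⟨0, hN⟩) = u := by
        funext l; exact hall ⟨0, hN⟩ l
      rw [this, huM]
  · rintro x ⟨α, hα, rfl⟩
    exact hu₀max' _ (fun l => hα)
end

section
/- There exists a real symmetric trilinear form ψ on ℝ² (corresponding to the state (|001⟩+|010⟩+|100⟩−|111⟩)/2) whose maximum absolute value 1/2 over triples of real unit vectors is attained at a non-symmetric triple of vectors, namely at vectors corresponding to the product state |001⟩; hence the uniqueness part of the main lemma fails over the reals. -/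
/-- Over the reals, the symmetric trilinear form corresponding to the state
(|001⟩+|010⟩+|100⟩−|111⟩)/2 attains its maximum 1/2 over real unit vectors at
a non-symmetric triple, namely at u = v = (1,0), w = (0,1). -/
theorem stmt_10 :
    ∃ f : (Fin 2 → ℝ) → (Fin 2 → ℝ) → (Fin 2 → ℝ) → ℝ,
      (∀ u v w, f u v w =
        (u 0 * v 0 * w 1 + u 0 * v 1 * w 0 + u 1 * v 0 * w 0
          - u 1 * v 1 * w 1) / 2) ∧
      -- f is symmetric under all permutations of its arguments
      (∀ u v w, f u v w = f v u w ∧ f u v w = f u w v) ∧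
      -- the maximum over real unit vectors is 1/2
      IsGreatest {x : ℝ | ∃ u v w : Fin 2 → ℝ,
          u 0 ^ 2 + u 1 ^ 2 = 1 ∧ v 0 ^ 2 + v 1 ^ 2 = 1 ∧
          w 0 ^ 2 + w 1 ^ 2 = 1 ∧ x = |f u v w|} (1 / 2) ∧
      -- attained at the non-symmetric triple u = v = (1,0), w = (0,1)
      |f ![1, 0] ![1, 0] ![0, 1]| = 1 / 2 ∧
      (![0, 1] : Fin 2 → ℝ) ≠ ![1, 0] ∧ (![0, 1] : Fin 2 → ℝ) ≠ -![1, 0] := by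
  refine ⟨fun u v w => (u 0 * v 0 * w 1 + u 0 * v 1 * w 0 + u 1 * v 0 * w 0
      - u 1 * v 1 * w 1) / 2, fun _ _ _ => rfl, fun u v w => ⟨by ring, by ring⟩,
    ⟨⟨![1, 0], ![1, 0], ![0, 1], by norm_num, by norm_num, by norm_num, by norm_num [abs_of_pos]⟩,
      ?_⟩, by norm_num [abs_of_pos], ?_, ?_⟩
  · rintro x ⟨u, v, w, hu, hv, hw, rfl⟩
    simp only []
    obtain ⟨S, hS⟩ : ∃ S, S = u 0 * v 0 * w 1 + u 0 * v 1 * w 0 + u 1 * v 0 * w 0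
        - u 1 * v 1 * w 1 := ⟨_, rfl⟩
    rw [← hS]
    have hprod : (u 0 ^ 2 + u 1 ^ 2) *
        ((v 0 * w 1 + v 1 * w 0) ^ 2 + (v 0 * w 0 - v 1 * w 1) ^ 2) = 1 := by
      have : (v 0 * w 1 + v 1 * w 0) ^ 2 + (v 0 * w 0 - v 1 * w 1) ^ 2 =
          (v 0 ^ 2 + v 1 ^ 2) * (w 0 ^ 2 + w 1 ^ 2) := by ring
      rw [this, hv, hw, hu]; ring
    have hkey : 1 - S ^ 2 =
        (u 1 * (v 0 * w 1 + v 1 * w 0) - u 0 * (v 0 * w 0 - v 1 * w 1)) ^ 2 := by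
      rw [hS]; linear_combination -hprod
    have hsq : S ^ 2 ≤ 1 := by
      nlinarith [sq_nonneg (u 1 * (v 0 * w 1 + v 1 * w 0) - u 0 * (v 0 * w 0 - v 1 * w 1))]
    rw [abs_le]
    constructor
    · nlinarith [sq_nonneg (S + 1)]
    · nlinarith [sq_nonneg (S - 1)]
  · intro h
    have := congrFun h 0
    norm_num at this
  · intro h
    have := congrFun h 0
    norm_num [Matrix.cons_val_zero] at this
end

section
/- For the 4-qubit translationally invariant state |ψ⟩ = (|0101⟩ + |1010⟩)/√2, the maximum overlap with product states |a⟩|b⟩|c⟩|d⟩ is 1/√2, attained at the non-symmetric states |0101⟩ and |1010⟩; moreover the maximum overlap with symmetric product states |a⟩|a⟩|a⟩|a⟩ is strictly smaller than 1/√2. -/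
open scoped BigOperators

/-- The coefficients of the translationally invariant 4-qubit state
(|0101⟩ + |1010⟩)/√2. -/
noncomputable def psi1010 : (Fin 4 → Fin 2) → ℂ := fun s =>
  if s = ![0, 1, 0, 1] ∨ s = ![1, 0, 1, 0] then (1 / Real.sqrt 2 : ℝ) else 0

/-- The overlap of the state with the product state |a⟩|b⟩|c⟩|d⟩. -/
noncomputable def overlap1010 (a b c d : Fin 2 → ℂ) : ℝ :=
  ‖∑ s : Fin 4 → Fin 2, psi1010 s *
    (starRingEnd ℂ) (a (s 0)) * (starRingEnd ℂ) (b (s 1)) *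
    (starRingEnd ℂ) (c (s 2)) * (starRingEnd ℂ) (d (s 3))‖

lemma overlap_eq (a b c d : Fin 2 → ℂ) :
    overlap1010 a b c d = ‖(((1/Real.sqrt 2:ℝ):ℂ) *
      ((starRingEnd ℂ) (a 0) * (starRingEnd ℂ) (b 1) * (starRingEnd ℂ) (c 0) * (starRingEnd ℂ) (d 1)
       + (starRingEnd ℂ) (a 1) * (starRingEnd ℂ) (b 0) * (starRingEnd ℂ) (c 1) * (starRingEnd ℂ) (d 0)))‖ := by
  unfold overlap1010
  congr 1
  rw [Fintype.sum_eq_add ![(0:Fin 2),1,0,1] ![1,0,1,0] (by decide)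
    (fun s hs => by simp [psi1010, hs.1, hs.2])]
  simp [psi1010]
  ring


/-- For |ψ⟩ = (|0101⟩+|1010⟩)/√2 the maximal overlap with product states is
1/√2, attained at the non-symmetric states |0101⟩ and |1010⟩, while the
overlap with every symmetric product state is strictly smaller than 1/√2. -/
theorem stmt_11 :
    IsGreatest {x : ℝ | ∃ a b c d : Fin 2 → ℂ,
        (∑ i, ‖a i‖ ^ 2 = 1) ∧ (∑ i, ‖b i‖ ^ 2 = 1) ∧
        (∑ i, ‖c i‖ ^ 2 = 1) ∧ (∑ i, ‖d i‖ ^ 2 = 1) ∧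
        x = overlap1010 a b c d} (1 / Real.sqrt 2) ∧
    overlap1010 ![1, 0] ![0, 1] ![1, 0] ![0, 1] = 1 / Real.sqrt 2 ∧
    overlap1010 ![0, 1] ![1, 0] ![0, 1] ![1, 0] = 1 / Real.sqrt 2 ∧
    (∀ a : Fin 2 → ℂ, (∑ i, ‖a i‖ ^ 2 = 1) →
      overlap1010 a a a a < 1 / Real.sqrt 2) := by
  have hpos : (0:ℝ) < 1 / Real.sqrt 2 := by positivity
  have h1 : overlap1010 ![1, 0] ![0, 1] ![1, 0] ![0, 1] = 1 / Real.sqrt 2 := by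
    rw [overlap_eq]
    norm_num [Complex.norm_real, Real.norm_eq_abs, abs_of_pos hpos]
  have h2 : overlap1010 ![0, 1] ![1, 0] ![0, 1] ![1, 0] = 1 / Real.sqrt 2 := by
    rw [overlap_eq]
    norm_num [Complex.norm_real, Real.norm_eq_abs, abs_of_pos hpos]
  refine ⟨⟨⟨![1,0], ![0,1], ![1,0], ![0,1], ?_, ?_, ?_, ?_, h1.symm⟩, ?_⟩, h1, h2, ?_⟩
  · simp [Fin.sum_univ_two]
  · simp [Fin.sum_univ_two]
  · simp [Fin.sum_univ_two]
  · simp [Fin.sum_univ_two]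
  · rintro x ⟨a, b, c, d, ha, hb, hc, hd, rfl⟩
    rw [overlap_eq]
    rw [Fin.sum_univ_two] at ha hb hc hd
    set A0 := ‖a 0‖; set A1 := ‖a 1‖
    set B0 := ‖b 0‖; set B1 := ‖b 1‖
    set C0 := ‖c 0‖; set C1 := ‖c 1‖
    set D0 := ‖d 0‖; set D1 := ‖d 1‖
    have key : A0 * B1 * C0 * D1 + A1 * B0 * C1 * D0 ≤ 1 := by
      nlinarith [sq_nonneg (A0*C0 - B1*D1), sq_nonneg (A1*C1 - B0*D0),
        norm_nonneg (a 0), norm_nonneg (a 1),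
        norm_nonneg (b 0), norm_nonneg (b 1),
        norm_nonneg (c 0), norm_nonneg (c 1),
        norm_nonneg (d 0), norm_nonneg (d 1),
        mul_nonneg (sq_nonneg A0) (sq_nonneg C1), mul_nonneg (sq_nonneg A1) (sq_nonneg C0),
        mul_nonneg (sq_nonneg B0) (sq_nonneg D1), mul_nonneg (sq_nonneg B1) (sq_nonneg D0)]
    calc ‖_‖ ≤ ‖((1/Real.sqrt 2:ℝ):ℂ)‖ *
          (‖((starRingEnd ℂ) (a 0) * (starRingEnd ℂ) (b 1) * (starRingEnd ℂ) (c 0) * (starRingEnd ℂ) (d 1))‖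
           + ‖((starRingEnd ℂ) (a 1) * (starRingEnd ℂ) (b 0) * (starRingEnd ℂ) (c 1) * (starRingEnd ℂ) (d 0))‖) := by
            rw [norm_mul]
            gcongr
            exact norm_add_le _ _
      _ ≤ 1 / Real.sqrt 2 := by
            simp only [norm_mul, Complex.norm_conj, Complex.norm_real, Real.norm_eq_abs, abs_of_pos hpos]
            nlinarith [key, hpos]
  · intro a ha
    rw [overlap_eq]
    rw [Fin.sum_univ_two] at ha
    have : (starRingEnd ℂ) (a 0) * (starRingEnd ℂ) (a 1) * (starRingEnd ℂ) (a 0) * (starRingEnd ℂ) (a 1)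
        + (starRingEnd ℂ) (a 1) * (starRingEnd ℂ) (a 0) * (starRingEnd ℂ) (a 1) * (starRingEnd ℂ) (a 0)
        = 2 * ((starRingEnd ℂ) (a 0))^2 * ((starRingEnd ℂ) (a 1))^2 := by ring
    rw [this]
    set p := ‖a 0‖; set q := ‖a 1‖
    have hle : 2 * p^2 * q^2 ≤ 1/2 := by nlinarith [sq_nonneg (p^2 - q^2)]
    have habs : ‖(((1/Real.sqrt 2:ℝ):ℂ) * (2 * ((starRingEnd ℂ) (a 0))^2 * ((starRingEnd ℂ) (a 1))^2))‖
        = (1/Real.sqrt 2) * (2 * p^2 * q^2) := by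
      simp [norm_mul, norm_pow, Complex.norm_conj, Complex.norm_real, Real.norm_eq_abs, abs_of_pos hpos, abs_of_pos (Real.sqrt_pos.2 (by norm_num : (0:ℝ) < 2)), p, q]
    rw [habs]
    nlinarith [hle, hpos]
end
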